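/- arXiv:2208.08326 — 10 statements merged into one kernel-verified Lean document; each statement's English description precedes it below -/
import Mathlib

section
/- For every m ∈ ℕ with m ≥ 1, every x ≥ 0, and every bounded continuous function f : [0,∞) → ℝ, lim_{n→∞} Σ_{k=0}^{mn} C(mn,k) (x/n)^k (1 − x/n)^{mn−k} f(k/m) = Σ_{k=0}^{∞} e^{−mx} (mx)^k / k! · f(k/m), i.e., lim_{n→∞} B_{mn}^{[−1]}(f(nt); x/n) = B_m^{[0]}(f(t); x). -/
open Filter Topology

lemma poisson_term_tendsto (m k : ℕ) (hm : 1 ≤ m) (x : ℝ) (hx : 0 ≤ x) :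
    Tendsto (fun n : ℕ => ((m * n).choose k : ℝ) * (x / n) ^ k * (1 - x / n) ^ (m * n - k))
      atTop (𝓝 (Real.exp (-(m * x)) * (m * x) ^ k / (k.factorial : ℝ))) := by
  have hm0 : (0:ℝ) < m := by exact_mod_cast hm
  have hA : Tendsto (fun n : ℕ => ∏ i ∈ Finset.range k, ((m : ℝ) - i / n)) atTop
      (𝓝 ((m : ℝ) ^ k)) := by
    have : ((m : ℝ) ^ k) = ∏ i ∈ Finset.range k, ((m : ℝ) - 0) := by simp
    rw [this]
    exact tendsto_finset_prod _ fun i _ =>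
      tendsto_const_nhds.sub (tendsto_const_div_atTop_nhds_zero_nat (i : ℝ))
  have hmn : Tendsto (fun n : ℕ => m * n) atTop atTop :=
    tendsto_atTop_mono (fun n => Nat.le_mul_of_pos_left n hm) tendsto_id
  have hB : Tendsto (fun n : ℕ => (1 + (-(m * x)) / (m * n : ℕ)) ^ (m * n)) atTop
      (𝓝 (Real.exp (-(m * x)))) :=
    (Real.tendsto_one_add_div_pow_exp (-(m * x))).comp hmn
  have hC : Tendsto (fun n : ℕ => (1 - x / n) ^ k) atTop (𝓝 1) := by
    have : Tendsto (fun n : ℕ => (1 - x / n)) atTop (𝓝 1) := by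
      simpa using tendsto_const_nhds.sub (tendsto_const_div_atTop_nhds_zero_nat x)
    simpa using this.pow k
  have hlim : Tendsto (fun n : ℕ =>
      (∏ i ∈ Finset.range k, ((m : ℝ) - i / n)) * x ^ k / (k.factorial : ℝ) *
        ((1 + (-(m * x)) / (m * n : ℕ)) ^ (m * n)) / ((1 - x / n) ^ k)) atTop
      (𝓝 ((m : ℝ) ^ k * x ^ k / (k.factorial : ℝ) * Real.exp (-(m * x)) / 1)) :=
    (((hA.mul_const _).div_const _).mul hB).div hC one_ne_zero
  have heq : (m : ℝ) ^ k * x ^ k / (k.factorial : ℝ) * Real.exp (-(m * x)) / 1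
      = Real.exp (-(m * x)) * (m * x) ^ k / (k.factorial : ℝ) := by
    rw [mul_pow]; ring
  rw [heq] at hlim
  refine hlim.congr' ?_
  filter_upwards [eventually_gt_atTop (⌈x⌉₊ + k)] with n hn
  have hnk : k ≤ n := le_of_lt (lt_of_le_of_lt (Nat.le_add_left k _) hn)
  have hxn : x < n := by
    have : (⌈x⌉₊ : ℝ) < n := by exact_mod_cast lt_of_le_of_lt (Nat.le_add_right _ _) hn
    exact lt_of_le_of_lt (Nat.le_ceil x) this
  have hn0 : (0:ℝ) < n := lt_of_le_of_lt hx hxn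
  have h1 : (0:ℝ) < 1 - x / n := by
    rw [sub_pos, div_lt_one hn0]; exact hxn
  have hkmn : k ≤ m * n := le_trans hnk (Nat.le_mul_of_pos_left n hm)
  -- rewrite choose
  have hchoose : ((m * n).choose k : ℝ) * (x / n) ^ k
      = (∏ i ∈ Finset.range k, ((m : ℝ) - i / n)) * x ^ k / (k.factorial : ℝ) := by
    have hdesc : ((m * n).choose k : ℝ) = ((m * n).descFactorial k : ℝ) / (k.factorial : ℝ) := by
      rw [Nat.descFactorial_eq_factorial_mul_choose]
      field_simp [Nat.factorial_ne_zero]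
      push_cast; ring
    have hprod : ((m * n).descFactorial k : ℝ) = ∏ i ∈ Finset.range k, ((m : ℝ) * n - i) := by
      rw [Nat.descFactorial_eq_prod_range, Nat.cast_prod]
      refine Finset.prod_congr rfl fun i hi => ?_
      have h : i ≤ m * n := le_trans (le_of_lt (Finset.mem_range.mp hi)) hkmn
      push_cast [Nat.cast_sub h]
      ring
    rw [hdesc, hprod, div_pow]
    have hsplit : ∏ i ∈ Finset.range k, ((m:ℝ) * n - i)
        = (∏ i ∈ Finset.range k, ((m : ℝ) - i / n)) * (n : ℝ) ^ k := by
      have hp : (n:ℝ) ^ k = ∏ _i ∈ Finset.range k, (n:ℝ) := by simp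
      rw [hp, ← Finset.prod_mul_distrib]
      refine Finset.prod_congr rfl fun i _ => ?_
      field_simp
    rw [hsplit]
    have hnk' : (n:ℝ) ^ k ≠ 0 := pow_ne_zero _ (ne_of_gt hn0)
    calc (∏ i ∈ Finset.range k, ((m:ℝ) - i / n)) * (n:ℝ) ^ k / (k.factorial : ℝ) *
          (x ^ k / (n:ℝ) ^ k)
        = (∏ i ∈ Finset.range k, ((m:ℝ) - i / n)) * x ^ k / (k.factorial : ℝ) *
          ((n:ℝ) ^ k / (n:ℝ) ^ k) := by ring
      _ = _ := by rw [div_self hnk', mul_one]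
  -- rewrite the power
  have hpow : (1 - x / n) ^ (m * n - k)
      = ((1 + (-(m * x)) / (m * n : ℕ)) ^ (m * n)) / ((1 - x / n) ^ k) := by
    have hmn0 : ((m * n : ℕ) : ℝ) ≠ 0 := by
      have hpos : 0 < m * n := Nat.mul_pos hm (by omega)
      exact_mod_cast Nat.pos_iff_ne_zero.mp hpos
    have h2 : 1 + (-(m * x)) / ((m * n : ℕ) : ℝ) = 1 - x / n := by
      push_cast
      rw [neg_div, mul_div_mul_left _ _ (ne_of_gt hm0)]
      ring
    rw [h2, pow_sub₀ _ (ne_of_gt h1) hkmn]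
    exact (div_eq_mul_inv _ _).symm
  rw [hchoose, hpow]
  ring

/-- **Poisson approximation to the binomial distribution, operator form.**
For `m ≥ 1`, `x ≥ 0` and every bounded continuous `f : [0,∞) → ℝ`,
`lim_{n→∞} B_{mn}^{[-1]}(f(nt); x/n) = B_m^{[0]}(f(t); x)`,
i.e. the rescaled Bernstein operators converge to the Szász–Mirakjan operator. -/
theorem stmt_1 (m : ℕ) (hm : 1 ≤ m) (x : ℝ) (hx : 0 ≤ x)
    (f : ℝ → ℝ) (hf : ContinuousOn f (Set.Ici 0))
    (hfb : ∃ M : ℝ, ∀ t ∈ Set.Ici (0 : ℝ), |f t| ≤ M) :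
    Tendsto (fun n : ℕ =>
        ∑ k ∈ Finset.range (m * n + 1),
          ((m * n).choose k : ℝ) * (x / n) ^ k * (1 - x / n) ^ (m * n - k) * f (k / m))
      atTop
      (𝓝 (∑' k : ℕ, Real.exp (-(m * x)) * (m * x) ^ k / (k.factorial : ℝ) * f (k / m))) := by
  obtain ⟨M, hM⟩ := hfb
  have hM0 : (0:ℝ) ≤ M := le_trans (abs_nonneg _) (hM 0 (Set.mem_Ici.mpr le_rfl))
  set N := ⌈x⌉₊ + 1 with hN
  rw [← tendsto_add_atTop_iff_nat N]
  have key : Tendsto (fun n : ℕ => ∑' k : ℕ,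
      ((m * (n + N)).choose k : ℝ) * (x / (n + N : ℕ)) ^ k *
        (1 - x / (n + N : ℕ)) ^ (m * (n + N) - k) * f (k / m)) atTop
      (𝓝 (∑' k : ℕ, Real.exp (-(m * x)) * (m * x) ^ k / (k.factorial : ℝ) * f (k / m))) := by
    apply tendsto_tsum_of_dominated_convergence
      (bound := fun k : ℕ => M * ((m * x) ^ k / (k.factorial : ℝ)))
    · exact (Real.summable_pow_div_factorial (m * x)).mul_left M
    · intro k
      exact ((poisson_term_tendsto m k hm x hx).comp (tendsto_add_atTop_nat N)).mul_const _
    · filter_upwards with n k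
      have hq0 : (0:ℝ) < ((n + N : ℕ) : ℝ) := by
        have : 0 < n + N := by omega
        exact_mod_cast this
      have hxq : x ≤ ((n + N : ℕ) : ℝ) := by
        refine le_trans (Nat.le_ceil x) ?_
        exact_mod_cast Nat.le_of_lt (by omega)
      have hxd0 : 0 ≤ x / ((n + N : ℕ) : ℝ) := div_nonneg hx hq0.le
      have hxd1 : x / ((n + N : ℕ) : ℝ) ≤ 1 := (div_le_one hq0).mpr hxq
      have h1a : (0:ℝ) ≤ 1 - x / ((n + N : ℕ) : ℝ) := by linarith
      have h1b : (1 - x / ((n + N : ℕ) : ℝ)) ^ (m * (n + N) - k) ≤ 1 :=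
        pow_le_one₀ h1a (by linarith)
      have hC : ((m * (n + N)).choose k : ℝ) ≤ ((m * (n + N) : ℕ) : ℝ) ^ k / k.factorial := by
        exact_mod_cast Nat.choose_le_pow_div k (m * (n + N))
      have hCx : ((m * (n + N)).choose k : ℝ) * (x / (n + N : ℕ)) ^ k
          ≤ (m * x) ^ k / k.factorial := by
        have h2 : ((m * (n + N) : ℕ) : ℝ) ^ k / k.factorial * (x / (n + N : ℕ)) ^ k
            = (m * x) ^ k / k.factorial := by
          rw [div_mul_eq_mul_div, ← mul_pow]
          congr 2
          push_cast
          field_simp [show ((n:ℝ) + N) ≠ 0 by exact_mod_cast hq0.ne']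
        calc ((m * (n + N)).choose k : ℝ) * (x / (n + N : ℕ)) ^ k
            ≤ ((m * (n + N) : ℕ) : ℝ) ^ k / k.factorial * (x / (n + N : ℕ)) ^ k :=
              mul_le_mul_of_nonneg_right hC (by positivity)
          _ = (m * x) ^ k / k.factorial := h2
      have hfk : |f (k / m)| ≤ M := hM _ (Set.mem_Ici.mpr (by positivity))
      have hterm0 : (0:ℝ) ≤ ((m * (n + N)).choose k : ℝ) * (x / (n + N : ℕ)) ^ k *
          (1 - x / (n + N : ℕ)) ^ (m * (n + N) - k) := by positivity
      calc ‖((m * (n + N)).choose k : ℝ) * (x / (n + N : ℕ)) ^ k *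
            (1 - x / (n + N : ℕ)) ^ (m * (n + N) - k) * f (k / m)‖
          = ((m * (n + N)).choose k : ℝ) * (x / (n + N : ℕ)) ^ k *
            (1 - x / (n + N : ℕ)) ^ (m * (n + N) - k) * |f (k / m)| := by
            rw [Real.norm_eq_abs, abs_mul, abs_of_nonneg hterm0]
        _ ≤ ((m * (n + N)).choose k : ℝ) * (x / (n + N : ℕ)) ^ k * 1 * M := by
            refine mul_le_mul ?_ hfk (abs_nonneg _) (by positivity)
            exact mul_le_mul_of_nonneg_left h1b (by positivity)
        _ = ((m * (n + N)).choose k : ℝ) * (x / (n + N : ℕ)) ^ k * M := by ring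
        _ ≤ (m * x) ^ k / k.factorial * M := mul_le_mul_of_nonneg_right hCx hM0
        _ = M * ((m * x) ^ k / (k.factorial : ℝ)) := by ring
  refine key.congr fun n => ?_
  refine tsum_eq_sum ?_
  intro k hk
  have hlt : m * (n + N) < k := by
    have := Finset.mem_range.not.mp hk
    omega
  rw [Nat.choose_eq_zero_of_lt hlt]
  simp
end

section
/- Let c > 0, m ∈ ℕ with m ≥ 1, and x ≥ 0. Then for every bounded continuous function f : [0,∞) → ℝ, lim_{n→∞} Σ_{j=0}^{∞} ( ∏_{l=0}^{j−1}(mn + c l) / j! ) (x/n)^j (1 + c x/n)^{−(mn/c + j)} f(j/m) = Σ_{j=0}^{∞} e^{−mx}(mx)^j/j! · f(j/m); that is, lim_{n→∞} B_{mn}^{[c]}(f(nt); x/n) = B_m^{[0]}(f(t); x). -/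
open Filter Topology

set_option maxHeartbeats 1000000 in
/-- **Convergence of rescaled Baskakov-type operators to the Szász–Mirakjan operator.**
For `c > 0`, `m ≥ 1`, `x ≥ 0` and every bounded continuous `f : [0,∞) → ℝ`,
`lim_{n→∞} B_{mn}^{[c]}(f(nt); x/n) = B_m^{[0]}(f(t); x)`. -/
theorem stmt_2 (c : ℝ) (hc : 0 < c) (m : ℕ) (hm : 1 ≤ m) (x : ℝ) (hx : 0 ≤ x)
    (f : ℝ → ℝ) (hf : ContinuousOn f (Set.Ici 0))
    (hfb : ∃ M : ℝ, ∀ t ∈ Set.Ici (0 : ℝ), |f t| ≤ M) :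
    Tendsto (fun n : ℕ =>
        ∑' j : ℕ,
          ((∏ l ∈ Finset.range j, ((m * n : ℕ) + c * l)) / (j.factorial : ℝ)) *
            (x / n) ^ j * (1 + c * (x / n)) ^ (-(((m * n : ℕ) : ℝ) / c + (j : ℝ))) * f (j / m))
      atTop
      (𝓝 (∑' j : ℕ, Real.exp (-(m * x)) * (m * x) ^ j / (j.factorial : ℝ) * f (j / m))) := by
  obtain ⟨M₀, hM₀⟩ := hfb
  set M : ℝ := max M₀ 0 with hMdef
  have hM : ∀ t ∈ Set.Ici (0 : ℝ), |f t| ≤ M := fun t ht => (hM₀ t ht).trans (le_max_left _ _)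
  have hM0 : (0 : ℝ) ≤ M := le_max_right _ _
  set C : ℝ := m * x + 1 with hCdef
  have hmx : (0 : ℝ) ≤ m * x := by positivity
  have hC : (1 : ℝ) ≤ C := by simp only [hCdef]; linarith
  have h2C : (1 : ℝ) ≤ 2 * C := by linarith
  set L : ℕ := ⌈4 * ((m : ℝ) * x)⌉₊ with hLdef
  have hL : 4 * ((m : ℝ) * x) ≤ L := Nat.le_ceil _
  set N : ℕ := ⌈4 * (c * x)⌉₊ + 1 with hNdef
  have hN1 : 1 ≤ N := Nat.le_add_left _ _
  have hNcx : 4 * (c * x) ≤ (N : ℝ) := by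
    calc 4 * (c * x) ≤ (⌈4 * (c * x)⌉₊ : ℝ) := Nat.le_ceil _
    _ ≤ N := by exact_mod_cast Nat.le_succ _
  have hbase : ∀ n : ℕ, (0 : ℝ) < 1 + c * (x / n) := by
    intro n
    have : (0 : ℝ) ≤ x / n := by positivity
    nlinarith
  clear_value M C L N
  apply tendsto_tsum_of_dominated_convergence
    (bound := fun j : ℕ => (M * (2 * C) ^ L) * (1 / 2 : ℝ) ^ j)
  · exact (summable_geometric_of_lt_one (by norm_num) (by norm_num)).mul_left _
  · -- pointwise convergence
    intro j
    have hA : Tendsto (fun n : ℕ =>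
        (∏ l ∈ Finset.range j, ((m * n : ℕ) + c * l)) / (j.factorial : ℝ) * (x / n) ^ j)
        atTop (𝓝 ((m * x) ^ j / (j.factorial : ℝ))) := by
      have hprod : Tendsto (fun n : ℕ => ∏ l ∈ Finset.range j, ((m : ℝ) * x + c * l * (x / n)))
          atTop (𝓝 ((m * x) ^ j)) := by
        have := tendsto_finset_prod (f := fun (l : ℕ) (n : ℕ) => (m : ℝ) * x + c * l * (x / n))
          (x := atTop) (a := fun _ => (m : ℝ) * x) (Finset.range j) (fun l _ => by
            have h0 : Tendsto (fun n : ℕ => x / (n : ℝ)) atTop (𝓝 0) :=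
              tendsto_const_div_atTop_nhds_zero_nat x
            have := (h0.const_mul (c * l)).const_add ((m : ℝ) * x)
            simpa [mul_assoc] using this)
        simpa using this
      have heq : ∀ᶠ n : ℕ in atTop, (∏ l ∈ Finset.range j, ((m : ℝ) * x + c * l * (x / n)))
          / (j.factorial : ℝ)
          = (∏ l ∈ Finset.range j, ((m * n : ℕ) + c * l)) / (j.factorial : ℝ) * (x / n) ^ j := by
        filter_upwards [eventually_ge_atTop 1] with n hn
        have hn0 : (n : ℝ) ≠ 0 := Nat.cast_ne_zero.mpr (by omega)
        rw [div_mul_eq_mul_div,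
          show (∏ l ∈ Finset.range j, (((m * n : ℕ) : ℝ) + c * l)) * (x / n) ^ j
              = ∏ l ∈ Finset.range j, ((((m * n : ℕ) : ℝ) + c * l) * (x / n)) from by
            rw [Finset.prod_mul_distrib, Finset.prod_const, Finset.card_range]]
        congr 1
        apply Finset.prod_congr rfl
        intro l _
        push_cast
        field_simp
      exact Tendsto.congr' heq (hprod.div_const _)
    have hB : Tendsto (fun n : ℕ => (1 + c * (x / n)) ^ (-(((m * n : ℕ) : ℝ) / c + (j : ℝ))))
        atTop (𝓝 (Real.exp (-(m * x)))) := by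
      have h1 : Tendsto (fun n : ℕ => (n : ℝ) * Real.log (1 + c * (x / n))) atTop (𝓝 (c * x)) := by
        have := (Real.tendsto_mul_log_one_add_div_atTop (c * x)).comp tendsto_natCast_atTop_atTop
        refine this.congr fun n => ?_
        simp only [Function.comp_apply]
        rw [mul_div_assoc]
      have h2 : Tendsto (fun n : ℕ => Real.log (1 + c * (x / n))) atTop (𝓝 0) := by
        have h0 : Tendsto (fun n : ℕ => x / (n : ℝ)) atTop (𝓝 0) :=
          tendsto_const_div_atTop_nhds_zero_nat x
        have h0' : Tendsto (fun n : ℕ => 1 + c * (x / n)) atTop (𝓝 1) := by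
          simpa using (h0.const_mul c).const_add (1 : ℝ)
        have := ((Real.continuousAt_log one_ne_zero).tendsto).comp h0'
        simpa using (by exact this : Tendsto (fun n : ℕ => Real.log (1 + c * (x / n))) atTop (𝓝 (Real.log 1)))
      have h3 : Tendsto (fun n : ℕ =>
          Real.log (1 + c * (x / n)) * (-(((m * n : ℕ) : ℝ) / c + (j : ℝ))))
          atTop (𝓝 (-((m : ℝ) * x))) := by
        have := (h1.const_mul (-((m : ℝ) / c))).add (h2.const_mul (-(j : ℝ)))
        have hval : -((m : ℝ) / c) * (c * x) + -(j : ℝ) * 0 = -((m : ℝ) * x) := by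
          field_simp
          ring
        rw [hval] at this
        refine this.congr fun n => ?_
        push_cast
        ring
      have := (Real.continuous_exp.tendsto _).comp h3
      refine this.congr fun n => ?_
      simp only [Function.comp_apply]
      rw [Real.rpow_def_of_pos (hbase n)]
    have := (hA.mul hB).mul_const (f (j / m))
    convert this using 2
    ring
  · -- domination
    filter_upwards [eventually_ge_atTop N] with n hn
    intro j
    have hnN : (N : ℝ) ≤ n := Nat.cast_le.mpr hn
    have hn1 : (1 : ℝ) ≤ (n : ℝ) := by
      have : (1 : ℝ) ≤ (N : ℝ) := by exact_mod_cast hN1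
      linarith
    have hn0 : (n : ℝ) ≠ 0 := by linarith
    set t : ℝ := x / n with htdef
    have ht : 0 ≤ t := by positivity
    set d : ℝ := c * t with hddef
    have hd0 : 0 ≤ d := by positivity
    have hd4 : d ≤ 1 / 4 := by
      have hcx : 0 ≤ c * x := by positivity
      have : d = c * x / n := by rw [hddef, htdef]; ring
      rw [this]
      rw [div_le_iff₀ (by linarith)]
      nlinarith
    have hmnt : (m : ℝ) * n * t = m * x := by
      rw [htdef]; field_simp; try ring
    clear_value t d
    have hbase' : (0 : ℝ) < 1 + d := by linarith
    have hfj : |f (j / m)| ≤ M := hM _ (by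
      simp only [Set.mem_Ici]
      positivity)
    -- nonnegativity of pieces
    have hP : 0 ≤ ∏ l ∈ Finset.range j, (((m * n : ℕ) : ℝ) + c * l) :=
      Finset.prod_nonneg fun l _ => by positivity
    have hR : 0 ≤ (1 + c * t) ^ (-(((m * n : ℕ) : ℝ) / c + (j : ℝ))) :=
      Real.rpow_nonneg (by rw [← hddef]; linarith) _
    -- bound the rpow factor
    have hRle : (1 + c * t) ^ (-(((m * n : ℕ) : ℝ) / c + (j : ℝ))) ≤ ((1 + d) ^ j)⁻¹ := by
      have h1 : (1 : ℝ) ≤ 1 + c * t := by rw [← hddef] at *; linarith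
      have h2 : -(((m * n : ℕ) : ℝ) / c + (j : ℝ)) ≤ -(j : ℝ) := by
        have : (0 : ℝ) ≤ ((m * n : ℕ) : ℝ) / c := by positivity
        linarith
      calc (1 + c * t) ^ (-(((m * n : ℕ) : ℝ) / c + (j : ℝ)))
          ≤ (1 + c * t) ^ (-(j : ℝ)) := Real.rpow_le_rpow_of_exponent_le h1 h2
        _ = ((1 + d) ^ j)⁻¹ := by
            rw [Real.rpow_neg (by linarith), Real.rpow_natCast, hddef]
    -- the product bound
    have hkey : (∏ l ∈ Finset.range j, (((m * n : ℕ) : ℝ) + c * l)) / (j.factorial : ℝ)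
        * t ^ j * ((1 + d) ^ j)⁻¹
        = ∏ l ∈ Finset.range j, ((((m * n : ℕ) : ℝ) + c * l) * t / ((l + 1) * (1 + d))) := by
      have hfact : ∏ l ∈ Finset.range j, ((l : ℝ) + 1) = (j.factorial : ℝ) := by
        exact_mod_cast congrArg (Nat.cast (R := ℝ)) (Finset.prod_range_add_one_eq_factorial j)
      rw [Finset.prod_div_distrib, Finset.prod_mul_distrib, Finset.prod_mul_distrib,
        Finset.prod_const, Finset.prod_const, Finset.card_range, hfact]
      have hfp : (0 : ℝ) < (j.factorial : ℝ) := by positivity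
      have hdp : (0 : ℝ) < (1 + d) ^ j := by positivity
      field_simp
      try ring
    have hFle : ∀ l ∈ Finset.range j,
        (((m * n : ℕ) : ℝ) + c * l) * t / ((l + 1) * (1 + d))
          ≤ (if l < L then 2 * C else 1) * (1 / 2) := by
      intro l _
      have hden : (0 : ℝ) < ((l : ℝ) + 1) * (1 + d) := by positivity
      have hnum : (((m * n : ℕ) : ℝ) + c * l) * t = m * x + l * d := by
        push_cast
        rw [hddef]
        linear_combination hmnt
      rw [div_le_iff₀ hden, hnum]
      by_cases hlL : l < L
      · simp only [hlL, if_true, hCdef]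
        have hl0 : (0 : ℝ) ≤ l := Nat.cast_nonneg l
        nlinarith [mul_nonneg hl0 hd0, mul_nonneg hmx hd0,
          mul_nonneg (mul_nonneg hmx hl0) hd0, mul_nonneg hmx hl0]
      · simp only [hlL, if_false]
        have hlL' : (L : ℝ) ≤ l := Nat.cast_le.mpr (Nat.le_of_not_lt hlL)
        have h4mx : 4 * ((m : ℝ) * x) ≤ l := le_trans hL hlL'
        have hl0 : (0 : ℝ) ≤ l := Nat.cast_nonneg l
        nlinarith [mul_nonneg hl0 hd0, mul_le_mul_of_nonneg_left hd4 hl0]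
    have hprodle : (∏ l ∈ Finset.range j,
        ((((m * n : ℕ) : ℝ) + c * l) * t / ((l + 1) * (1 + d))))
          ≤ (2 * C) ^ L * (1 / 2) ^ j := by
      calc (∏ l ∈ Finset.range j, ((((m * n : ℕ) : ℝ) + c * l) * t / ((l + 1) * (1 + d))))
          ≤ ∏ l ∈ Finset.range j, ((if l < L then 2 * C else 1) * (1 / 2)) := by
            apply Finset.prod_le_prod
            · intro l _
              have : (0 : ℝ) < ((l : ℝ) + 1) * (1 + d) := by positivity
              positivity
            · exact hFle
        _ = (∏ l ∈ Finset.range j, (if l < L then (2 * C : ℝ) else 1)) * (1 / 2) ^ j := by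
            rw [Finset.prod_mul_distrib, Finset.prod_const, Finset.card_range]
        _ ≤ (2 * C) ^ L * (1 / 2) ^ j := by
            apply mul_le_mul_of_nonneg_right _ (by positivity)
            calc (∏ l ∈ Finset.range j, (if l < L then (2 * C : ℝ) else 1))
                = (2 * C) ^ ((Finset.range j).filter (· < L)).card := by
                  rw [Finset.prod_ite, Finset.prod_const, Finset.prod_const, one_pow, mul_one]
              _ ≤ (2 * C) ^ L := by
                  apply pow_le_pow_right₀ h2C
                  calc ((Finset.range j).filter (· < L)).card
                      ≤ (Finset.range L).card := by
                        apply Finset.card_le_card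
                        intro a ha
                        simp only [Finset.mem_filter, Finset.mem_range] at ha ⊢
                        exact ha.2
                    _ = L := Finset.card_range L
    -- assemble
    have habs : ‖(∏ l ∈ Finset.range j, (((m * n : ℕ) : ℝ) + c * l)) / (j.factorial : ℝ)
        * t ^ j * (1 + c * t) ^ (-(((m * n : ℕ) : ℝ) / c + (j : ℝ))) * f (j / m)‖
        = (∏ l ∈ Finset.range j, (((m * n : ℕ) : ℝ) + c * l)) / (j.factorial : ℝ)
        * t ^ j * (1 + c * t) ^ (-(((m * n : ℕ) : ℝ) / c + (j : ℝ))) * |f (j / m)| := by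
      rw [Real.norm_eq_abs, abs_mul]
      congr 1
      rw [abs_of_nonneg]
      have hfp : (0 : ℝ) < (j.factorial : ℝ) := by positivity
      have htj : (0 : ℝ) ≤ t ^ j := by positivity
      positivity
    rw [hddef, habs]
    have hcore : (∏ l ∈ Finset.range j, (((m * n : ℕ) : ℝ) + c * l)) / (j.factorial : ℝ)
        * t ^ j * (1 + c * t) ^ (-(((m * n : ℕ) : ℝ) / c + (j : ℝ)))
        ≤ (2 * C) ^ L * (1 / 2) ^ j := by
      have hfp : (0 : ℝ) < (j.factorial : ℝ) := by positivity
      have hstep : (∏ l ∈ Finset.range j, (((m * n : ℕ) : ℝ) + c * l)) / (j.factorial : ℝ)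
          * t ^ j * (1 + c * t) ^ (-(((m * n : ℕ) : ℝ) / c + (j : ℝ)))
          ≤ (∏ l ∈ Finset.range j, (((m * n : ℕ) : ℝ) + c * l)) / (j.factorial : ℝ)
          * t ^ j * ((1 + d) ^ j)⁻¹ := by
        apply mul_le_mul_of_nonneg_left hRle
        positivity
      calc _ ≤ (∏ l ∈ Finset.range j, (((m * n : ℕ) : ℝ) + c * l)) / (j.factorial : ℝ)
          * t ^ j * ((1 + d) ^ j)⁻¹ := hstep
        _ = ∏ l ∈ Finset.range j,
            ((((m * n : ℕ) : ℝ) + c * l) * t / ((l + 1) * (1 + d))) := hkey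
        _ ≤ (2 * C) ^ L * (1 / 2) ^ j := hprodle
    calc (∏ l ∈ Finset.range j, (((m * n : ℕ) : ℝ) + c * l)) / (j.factorial : ℝ)
        * t ^ j * (1 + c * t) ^ (-(((m * n : ℕ) : ℝ) / c + (j : ℝ))) * |f (j / m)|
        ≤ (∏ l ∈ Finset.range j, (((m * n : ℕ) : ℝ) + c * l)) / (j.factorial : ℝ)
        * t ^ j * (1 + c * t) ^ (-(((m * n : ℕ) : ℝ) / c + (j : ℝ))) * M := by
          apply mul_le_mul_of_nonneg_left hfj
          have hfp : (0 : ℝ) < (j.factorial : ℝ) := by positivity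
          positivity
      _ ≤ (2 * C) ^ L * (1 / 2) ^ j * M := by
          apply mul_le_mul_of_nonneg_right hcore hM0
      _ = M * (2 * C) ^ L * (1 / 2) ^ j := by ring
end

section
/- Let c > 0, let n > 0 be real, x ≥ 0, and s ∈ ℝ. Then Σ_{j=0}^{∞} ( ∏_{l=0}^{j−1}(n + c l) / j! ) x^j (1 + c x)^{−(n/c + j)} e^{i s j / n} = ( 1 − c x (e^{i s / n} − 1) )^{−n/c}, where the right-hand side is the principal-branch complex power (the base 1 − cx(e^{is/n} − 1) has strictly positive real part). -/
open Filter Topology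

private lemma hasDerivAt_one_sub_cpow (b : ℂ) {w : ℂ} (hw : w ∈ Metric.ball (0:ℂ) 1) :
    HasDerivAt (fun w : ℂ => (1 - w) ^ b) (-b * (1 - w) ^ (b - 1)) w := by
  have habs : ‖w‖ < 1 := by simpa using hw
  have hre : 0 < (1 - w).re := by
    have h1 : |w.re| < 1 := lt_of_le_of_lt (Complex.abs_re_le_norm w) habs
    have := (abs_lt.mp h1).2
    simp only [Complex.sub_re, Complex.one_re]
    linarith
  have h0 : (1 - w) ∈ Complex.slitPlane := Or.inl hre
  have h1 : HasDerivAt (fun w : ℂ => 1 - w) (-1) w := by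
    simpa using (hasDerivAt_id w).const_sub 1
  have h2 := h1.cpow_const (c := b) h0
  convert h2 using 1
  ring

private lemma iteratedDeriv_one_sub_cpow (a : ℂ) :
    ∀ j : ℕ, ∀ w ∈ Metric.ball (0:ℂ) 1,
      iteratedDeriv j (fun w : ℂ => (1 - w) ^ (-a)) w
        = (∏ l ∈ Finset.range j, (a + l)) * (1 - w) ^ (-a - j) := by
  intro j
  induction j with
  | zero => intro w _; simp
  | succ j ih =>
    intro w hw
    rw [iteratedDeriv_succ]
    have hev : iteratedDeriv j (fun w : ℂ => (1 - w) ^ (-a))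
        =ᶠ[nhds w] fun u => (∏ l ∈ Finset.range j, (a + l)) * (1 - u) ^ (-a - j) :=
      Filter.eventuallyEq_of_mem (Metric.isOpen_ball.mem_nhds hw) ih
    rw [hev.deriv_eq]
    rw [((hasDerivAt_one_sub_cpow (-a - j) hw).const_mul
        (∏ l ∈ Finset.range j, (a + l))).deriv]
    rw [Finset.prod_range_succ]
    have he : (-a - (j:ℂ)) - 1 = -a - ((j:ℕ) + 1 : ℕ) := by push_cast; ring
    rw [he]
    push_cast
    ring

private lemma hasSum_binomial (a : ℂ) {z : ℂ} (hz : ‖z‖ < 1) :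
    HasSum (fun j : ℕ => (∏ l ∈ Finset.range j, (a + l)) / (j.factorial : ℂ) * z ^ j)
      ((1 - z) ^ (-a)) := by
  have hdiff : DifferentiableOn ℂ (fun w : ℂ => (1 - w) ^ (-a)) (Metric.ball 0 1) :=
    fun w hw => ((hasDerivAt_one_sub_cpow (-a) hw).differentiableAt).differentiableWithinAt
  have hzball : z ∈ Metric.ball (0:ℂ) 1 := by simpa using hz
  have H := Complex.hasSum_taylorSeries_on_ball hdiff hzball
  simp only [sub_zero] at H
  have hfun : (fun j : ℕ => (∏ l ∈ Finset.range j, (a + l)) / (j.factorial : ℂ) * z ^ j)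
      = fun j : ℕ => (j.factorial : ℂ)⁻¹ • z ^ j • iteratedDeriv j (fun w : ℂ => (1 - w) ^ (-a)) 0 := by
    funext j
    rw [iteratedDeriv_one_sub_cpow a j 0 (by simp)]
    rw [show (1:ℂ) - 0 = 1 by ring, Complex.one_cpow]
    simp only [smul_eq_mul]
    rw [div_eq_mul_inv]
    ring
  rw [hfun]
  exact H

private lemma cpow_ofReal_mul {r : ℝ} (hr : 0 < r) {w : ℂ} (hw : w ≠ 0) (t : ℂ) :
    ((r : ℂ) * w) ^ t = (r : ℂ) ^ t * w ^ t := by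
  have hr0 : (r : ℂ) ≠ 0 := by exact_mod_cast hr.ne'
  rw [Complex.cpow_def_of_ne_zero (mul_ne_zero hr0 hw),
    Complex.cpow_def_of_ne_zero hr0, Complex.cpow_def_of_ne_zero hw,
    Complex.log_ofReal_mul hr hw, ← Complex.exp_add,
    Complex.ofReal_log hr.le]
  ring_nf

/-- **Baskakov-type operators applied to complex exponentials.**
For `c > 0`, real `n > 0`, `x ≥ 0` and `s ∈ ℝ`,
`B_n^{[c]}(e^{ist}; x) = (1 - cx(e^{is/n} - 1))^{-n/c}`,
the right-hand side being the principal-branch complex power. -/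
theorem stmt_3 (c : ℝ) (hc : 0 < c) (n : ℝ) (hn : 0 < n) (x : ℝ) (hx : 0 ≤ x) (s : ℝ) :
    ∑' j : ℕ,
        ((((∏ l ∈ Finset.range j, (n + c * l)) / (j.factorial : ℝ)) *
            x ^ j * (1 + c * x) ^ (-(n / c + (j : ℝ))) : ℝ) : ℂ) *
          Complex.exp (Complex.I * (s : ℂ) * (j : ℂ) / (n : ℂ)) =
      (1 - (c : ℂ) * (x : ℂ) * (Complex.exp (Complex.I * (s : ℂ) / (n : ℂ)) - 1)) ^
        (-(n / c) : ℂ) := by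
  have hb : (0:ℝ) < 1 + c * x := by positivity
  set E : ℂ := Complex.exp (Complex.I * (s : ℂ) / (n : ℂ)) with hE
  have habsE : ‖E‖ = 1 := by
    rw [hE, show Complex.I * (s : ℂ) / (n : ℂ) = ((s / n : ℝ) : ℂ) * Complex.I by
      push_cast; ring]
    exact Complex.norm_exp_ofReal_mul_I _
  set z : ℂ := ((c * x / (1 + c * x) : ℝ) : ℂ) * E with hz
  have habsz : ‖z‖ < 1 := by
    rw [hz, norm_mul, habsE, mul_one, Complex.norm_real, Real.norm_eq_abs,
      abs_of_nonneg (by positivity)]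
    rw [div_lt_one hb]
    linarith
  have key : ∀ j : ℕ,
      ((((∏ l ∈ Finset.range j, (n + c * l)) / (j.factorial : ℝ)) *
          x ^ j * (1 + c * x) ^ (-(n / c + (j : ℝ))) : ℝ) : ℂ) *
        Complex.exp (Complex.I * (s : ℂ) * (j : ℂ) / (n : ℂ))
      = (((1 + c * x) ^ (-(n / c)) : ℝ) : ℂ) *
          ((∏ l ∈ Finset.range j, (((n / c : ℝ) : ℂ) + l)) / (j.factorial : ℂ) * z ^ j) := by
    intro j
    have hexp : Complex.exp (Complex.I * (s : ℂ) * (j : ℂ) / (n : ℂ)) = E ^ j := by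
      rw [hE, ← Complex.exp_nat_mul]
      congr 1
      push_cast
      ring
    have hj : (1 + c * x) ^ (-(j : ℝ)) = ((1 + c * x)⁻¹) ^ j := by
      rw [Real.rpow_neg hb.le, Real.rpow_natCast, inv_pow]
    have h1 : (1 + c * x) ^ (-(n / c + (j : ℝ)))
        = (1 + c * x) ^ (-(n / c)) * ((1 + c * x)⁻¹) ^ j := by
      rw [show -(n / c + (j : ℝ)) = -(n / c) + (-(j : ℝ)) by ring,
        Real.rpow_add hb, hj]
    have h2 : ∏ l ∈ Finset.range j, (n + c * (l : ℝ))
        = c ^ j * ∏ l ∈ Finset.range j, (n / c + (l : ℝ)) := by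
      calc ∏ l ∈ Finset.range j, (n + c * (l : ℝ))
          = ∏ l ∈ Finset.range j, (c * (n / c + (l : ℝ))) :=
            Finset.prod_congr rfl fun l _ => by field_simp
        _ = c ^ j * ∏ l ∈ Finset.range j, (n / c + (l : ℝ)) := by
            rw [Finset.prod_mul_distrib, Finset.prod_const, Finset.card_range]
    rw [hexp, h1, h2, hz]
    push_cast
    ring
  rw [tsum_congr key, ((hasSum_binomial ((n / c : ℝ) : ℂ) habsz).mul_left _).tsum_eq]
  have hz0 : (1:ℂ) - z ≠ 0 := by
    intro h0
    rw [sub_eq_zero] at h0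
    rw [← h0] at habsz
    simp at habsz
  have hb' : (1 + (c : ℂ) * (x : ℂ)) ≠ 0 := by
    intro h
    have := congrArg Complex.re h
    simp at this
    linarith
  have hfac : (1:ℂ) - (c : ℂ) * (x : ℂ) * (E - 1) = ((1 + c * x : ℝ) : ℂ) * (1 - z) := by
    rw [hz]
    push_cast
    field_simp
    ring
  rw [hfac, cpow_ofReal_mul hb hz0, Complex.ofReal_cpow hb.le]
  push_cast
  ring
end

section
/- Let c > 0, ρ > 0, k ∈ ℕ, m ∈ ℕ with m ≥ 1 and mρ > kc, and x ≥ 0. Then for every bounded continuous f : [0,∞) → ℝ, lim_{n→∞} Σ_{j=0}^{∞} f( n((2j+k)ρ + k) / (2(mnρ − kc)) ) · p_{mn+kc,j}^{[c]}(x/n) = Σ_{j=0}^{∞} f( ((2j+k)ρ + k) / (2mρ) ) · e^{−mx}(mx)^j / j!; that is, lim_{n→∞} D_{mn,ρ}^{[c](k)}( f(nt); x/n ) = D_{m,ρ}^{[0](k)}( f(t); x ). -/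
open Filter Topology

set_option maxHeartbeats 1000000 in

/-- **Convergence of the rescaled discrete operators `D_{mn,ρ}^{[c](k)}` associated with the
linking operators to `D_{m,ρ}^{[0](k)}`:** for `c > 0`, `ρ > 0`, `k ∈ ℕ`, `m ≥ 1` with
`mρ > kc`, `x ≥ 0` and bounded continuous `f : [0,∞) → ℝ`,
`lim_{n→∞} D_{mn,ρ}^{[c](k)}(f(nt); x/n) = D_{m,ρ}^{[0](k)}(f(t); x)`. -/
theorem stmt_5 (c ρ : ℝ) (hc : 0 < c) (hρ : 0 < ρ) (k m : ℕ) (hm : 1 ≤ m)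
    (hmρ : k * c < m * ρ) (x : ℝ) (hx : 0 ≤ x)
    (f : ℝ → ℝ) (hf : ContinuousOn f (Set.Ici 0))
    (hfb : ∃ M : ℝ, ∀ t ∈ Set.Ici (0 : ℝ), |f t| ≤ M) :
    Tendsto (fun n : ℕ =>
        ∑' j : ℕ,
          f ((n : ℝ) * ((2 * j + k) * ρ + k) / (2 * ((m * n : ℕ) * ρ - k * c))) *
            (((∏ l ∈ Finset.range j, (((m * n : ℕ) : ℝ) + k * c + c * l)) / (j.factorial : ℝ)) *
              (x / n) ^ j *
                (1 + c * (x / n)) ^ (-((((m * n : ℕ) : ℝ) + k * c) / c + (j : ℝ)))))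
      atTop
      (𝓝 (∑' j : ℕ,
        f (((2 * j + k) * ρ + k) / (2 * (m * ρ))) *
          (Real.exp (-(m * x)) * (m * x) ^ j / (j.factorial : ℝ)))) := by
  obtain ⟨M, hM⟩ := hfb
  have hc0 : (0:ℝ) ≤ c := hc.le
  have hm1 : (1:ℝ) ≤ (m:ℝ) := by exact_mod_cast hm
  have hk0 : (0:ℝ) ≤ (k:ℝ) := Nat.cast_nonneg k
  have hmx0 : (0:ℝ) ≤ (m:ℝ) * x := mul_nonneg (by linarith) hx
  have hkcx0 : (0:ℝ) ≤ ((k:ℝ) + 1) * c * x := mul_nonneg (mul_nonneg (by linarith) hc0) hx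
  set M' : ℝ := max M 0 with hM'def
  have hM'0 : (0:ℝ) ≤ M' := le_max_right _ _
  have hMle : ∀ t ∈ Set.Ici (0:ℝ), |f t| ≤ M' := fun t ht => (hM t ht).trans (le_max_left _ _)
  set B : ℝ := (m:ℝ) * x + ((k:ℝ) + 1) * c * x + 1 with hBdef
  have hB1 : (1:ℝ) ≤ B := by rw [hBdef]; linarith
  have h2B : (1:ℝ) ≤ 2 * B := by linarith
  set L0 : ℕ := ⌈4 * ((m:ℝ) * x)⌉₊ with hL0def
  set N : ℕ := max 1 ⌈4 * (((k:ℝ) + 1) * c * x)⌉₊ with hNdef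
  have hN1 : 1 ≤ N := le_max_left _ _
  have hsum : Summable (fun j : ℕ => M' * ((2*B)^L0 * (1/2:ℝ)^j)) :=
    ((summable_geometric_of_lt_one (by norm_num) (by norm_num)).mul_left _).mul_left _
  refine tendsto_tsum_of_dominated_convergence hsum ?_ ?_
  · -- pointwise convergence for each j
    intro j
    have hp0 : (0:ℝ) ≤ ((2*(j:ℝ)+k)*ρ+k) := by positivity
    have harg : Tendsto (fun n : ℕ =>
        (n : ℝ) * ((2 * j + k) * ρ + k) / (2 * (((m * n : ℕ):ℝ) * ρ - k * c))) atTop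
        (𝓝 (((2 * (j:ℝ) + k) * ρ + k) / (2 * ((m:ℝ) * ρ)))) := by
      have h0 : Tendsto (fun n : ℕ => ((k:ℝ)*c)/n) atTop (𝓝 0) :=
        tendsto_const_div_atTop_nhds_zero_nat _
      have hden : Tendsto (fun n : ℕ => 2 * ((m:ℝ)*ρ - (k:ℝ)*c/n)) atTop (𝓝 (2*((m:ℝ)*ρ))) := by
        have h2 := h0.const_sub ((m:ℝ)*ρ)
        simpa using h2.const_mul (2:ℝ)
      have h1 : Tendsto (fun n : ℕ => ((2*(j:ℝ)+k)*ρ+k) / (2 * ((m:ℝ)*ρ - (k:ℝ)*c/n))) atTop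
          (𝓝 (((2*(j:ℝ)+k)*ρ+k)/(2*((m:ℝ)*ρ)))) :=
        tendsto_const_nhds.div hden (by positivity)
      refine h1.congr' ?_
      filter_upwards [eventually_ge_atTop 1] with n hn
      have hn1 : (1:ℝ) ≤ (n:ℝ) := by exact_mod_cast hn
      have hn0 : (n:ℝ) ≠ 0 := by positivity
      have hkcn : (k:ℝ)*c/n ≤ (k:ℝ)*c := div_le_self (mul_nonneg hk0 hc0) hn1
      have d1 : (0:ℝ) < 2*((m:ℝ)*ρ - (k:ℝ)*c/n) := by linarith
      have hmnρ : (m:ℝ)*ρ ≤ (m:ℝ)*(n:ℝ)*ρ := by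
        nlinarith [mul_nonneg (mul_nonneg (by linarith : (0:ℝ) ≤ (m:ℝ)) hρ.le)
          (by linarith : (0:ℝ) ≤ (n:ℝ) - 1)]
      have d2 : (0:ℝ) < 2*((m:ℝ)*(n:ℝ)*ρ - (k:ℝ)*c) := by linarith
      push_cast
      rw [div_eq_div_iff d1.ne' d2.ne']
      field_simp
    have hpIci : ((2 * (j:ℝ) + k) * ρ + k) / (2 * ((m:ℝ) * ρ)) ∈ Set.Ici (0:ℝ) :=
      Set.mem_Ici.mpr (div_nonneg hp0 (by positivity))
    have hargIci : ∀ᶠ n : ℕ in atTop, (n : ℝ) * ((2 * j + k) * ρ + k) /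
        (2 * (((m * n : ℕ):ℝ) * ρ - k * c)) ∈ Set.Ici (0:ℝ) := by
      filter_upwards [eventually_ge_atTop 1] with n hn
      have hn1 : (1:ℝ) ≤ (n:ℝ) := by exact_mod_cast hn
      refine Set.mem_Ici.mpr (div_nonneg (mul_nonneg (Nat.cast_nonneg n) hp0) ?_)
      push_cast
      nlinarith [mul_nonneg hk0 hc0]
    have hfarg : Tendsto (fun n : ℕ => f ((n : ℝ) * ((2 * j + k) * ρ + k) /
        (2 * (((m * n : ℕ):ℝ) * ρ - k * c)))) atTop
        (𝓝 (f (((2 * (j:ℝ) + k) * ρ + k) / (2 * ((m:ℝ) * ρ))))) :=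
      ((hf _ hpIci).tendsto).comp (tendsto_nhdsWithin_iff.mpr ⟨harg, hargIci⟩)
    have hL : Tendsto (fun n : ℕ => (n:ℝ) * Real.log (1 + c*x / n)) atTop (𝓝 (c*x)) :=
      (Real.tendsto_mul_log_one_add_div_atTop (c*x)).comp tendsto_natCast_atTop_atTop
    have hcoef : Tendsto (fun n : ℕ => -(((m:ℝ) + ((k:ℝ)*c + c*j)/n)/c)) atTop
        (𝓝 (-((m:ℝ)/c))) := by
      have h0 : Tendsto (fun n : ℕ => ((k:ℝ)*c + c*(j:ℝ))/n) atTop (𝓝 0) :=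
        tendsto_const_div_atTop_nhds_zero_nat _
      simpa using ((h0.const_add ((m:ℝ))).div_const c).neg
    have hE : Tendsto (fun n : ℕ =>
        (-((((m * n : ℕ):ℝ) + k * c) / c + (j:ℝ))) * Real.log (1 + c * (x / n))) atTop
        (𝓝 (-((m:ℝ)*x))) := by
      have hval : -((m:ℝ)/c) * (c*x) = -((m:ℝ)*x) := by field_simp
      rw [← hval]
      refine (hcoef.mul hL).congr' ?_
      filter_upwards [eventually_ge_atTop 1] with n hn
      have hn0 : (n:ℝ) ≠ 0 := by positivity
      have hlog : Real.log (1 + c * x / (n:ℝ)) = Real.log (1 + c * (x / n)) := by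
        rw [mul_div_assoc]
      rw [hlog]
      push_cast
      field_simp
      ring
    have hG : Tendsto (fun n : ℕ =>
        (1 + c * (x / n)) ^ (-((((m * n : ℕ):ℝ) + k * c) / c + (j:ℝ)))) atTop
        (𝓝 (Real.exp (-((m:ℝ)*x)))) := by
      refine ((Real.continuous_exp.tendsto _).comp hE).congr fun n => ?_
      have hb : (0:ℝ) < 1 + c * (x / n) := by
        have : (0:ℝ) ≤ c * (x / n) := mul_nonneg hc0 (div_nonneg hx (Nat.cast_nonneg n))
        linarith
      simp only [Function.comp_apply]
      rw [Real.rpow_def_of_pos hb, mul_comm]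
    have hP : Tendsto (fun n : ℕ =>
        (∏ l ∈ Finset.range j, (((m * n : ℕ):ℝ) + k * c + c * l)) / (j.factorial : ℝ) *
          (x / n) ^ j) atTop (𝓝 (((m:ℝ)*x)^j / (j.factorial : ℝ))) := by
      have hfac : ∀ l ∈ Finset.range j, Tendsto
          (fun n : ℕ => (m:ℝ)*x + ((k:ℝ)*c + c*l)*x/n) atTop (𝓝 ((m:ℝ)*x + 0)) := by
        intro l _
        exact (tendsto_const_div_atTop_nhds_zero_nat (((k:ℝ)*c + c*(l:ℝ))*x)).const_add ((m:ℝ)*x)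
      have hprod := tendsto_finset_prod (Finset.range j) hfac
      rw [Finset.prod_const, Finset.card_range, add_zero] at hprod
      have h2 := hprod.div_const ((j.factorial : ℝ))
      refine h2.congr' ?_
      filter_upwards [eventually_ge_atTop 1] with n hn
      have hn0 : (n:ℝ) ≠ 0 := by positivity
      rw [div_mul_eq_mul_div]
      congr 1
      calc ∏ l ∈ Finset.range j, ((m:ℝ)*x + ((k:ℝ)*c + c*l)*x/n)
          = ∏ l ∈ Finset.range j, ((((m * n : ℕ):ℝ) + k * c + c * l) * (x/n)) := by
            refine Finset.prod_congr rfl fun l _ => ?_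
            push_cast
            field_simp
            ring
        _ = (∏ l ∈ Finset.range j, (((m * n : ℕ):ℝ) + k * c + c * l)) * (x/n)^j := by
            rw [Finset.prod_mul_distrib, Finset.prod_const, Finset.card_range]
    have hW := hP.mul hG
    have htarget : f (((2 * (j:ℝ) + k) * ρ + k) / (2 * ((m:ℝ) * ρ))) *
        (Real.exp (-((m:ℝ) * x)) * ((m:ℝ) * x) ^ j / (j.factorial : ℝ)) =
        f (((2 * (j:ℝ) + k) * ρ + k) / (2 * ((m:ℝ) * ρ))) *
        (((m:ℝ)*x)^j / (j.factorial : ℝ) * Real.exp (-((m:ℝ)*x))) := by ring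
    rw [htarget]
    exact hfarg.mul hW
  · -- uniform domination for n ≥ N
    filter_upwards [eventually_ge_atTop N] with n hn
    intro j
    have hnN : (N:ℝ) ≤ (n:ℝ) := by exact_mod_cast hn
    have hNc : (1:ℝ) ≤ (N:ℝ) := by exact_mod_cast hN1
    have hn1 : (1:ℝ) ≤ (n:ℝ) := le_trans hNc hnN
    have hn0 : (0:ℝ) < (n:ℝ) := by linarith
    have hncx : (0:ℝ) < (n:ℝ) + c * x := by nlinarith
    have hcxn0 : (0:ℝ) ≤ c * (x / n) := mul_nonneg hc0 (div_nonneg hx hn0.le)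
    have hb0 : (0:ℝ) < 1 + c * (x / n) := by linarith
    have hb1 : (1:ℝ) ≤ 1 + c * (x / n) := by linarith
    have hraw : ∀ l : ℕ, (0:ℝ) ≤ ((m * n : ℕ):ℝ) + k * c + c * l := by
      intro l
      exact add_nonneg (add_nonneg (Nat.cast_nonneg _) (mul_nonneg hk0 hc0))
        (mul_nonneg hc0 (Nat.cast_nonneg _))
    have hprodnn : (0:ℝ) ≤ ∏ l ∈ Finset.range j, (((m * n : ℕ):ℝ) + k * c + c * l) :=
      Finset.prod_nonneg fun l _ => hraw l
    have hQnn : (0:ℝ) ≤ (∏ l ∈ Finset.range j, (((m * n : ℕ):ℝ) + k * c + c * l)) /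
        (j.factorial : ℝ) * (x / n) ^ j :=
      mul_nonneg (div_nonneg hprodnn (by positivity)) (pow_nonneg (div_nonneg hx hn0.le) j)
    have hWnn : (0:ℝ) ≤ (∏ l ∈ Finset.range j, (((m * n : ℕ):ℝ) + k * c + c * l)) /
        (j.factorial : ℝ) * (x / n) ^ j *
        (1 + c * (x / n)) ^ (-((((m * n : ℕ):ℝ) + k * c) / c + (j:ℝ))) :=
      mul_nonneg hQnn (Real.rpow_nonneg hb0.le _)
    -- Step 1: kill the rpow
    have hsplit : (1 + c * (x / n)) ^ (-((((m * n : ℕ):ℝ) + k * c) / c + (j:ℝ))) =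
        (1 + c * (x / n)) ^ (-((((m * n : ℕ):ℝ) + k * c) / c)) *
          (1 + c * (x / n)) ^ (-(j:ℝ)) := by
      rw [← Real.rpow_add hb0]
      ring_nf
    have hbj : (1 + c * (x / n)) ^ (-(j:ℝ)) = ((1 + c * (x / n)) ^ j)⁻¹ := by
      rw [Real.rpow_neg hb0.le, Real.rpow_natCast]
    have hrpow1 : (1 + c * (x / n)) ^ (-((((m * n : ℕ):ℝ) + k * c) / c)) ≤ 1 := by
      apply Real.rpow_le_one_of_one_le_of_nonpos hb1
      exact neg_nonpos.mpr (div_nonneg (add_nonneg (Nat.cast_nonneg _)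
        (mul_nonneg hk0 hc0)) hc0)
    have hstep1 : (∏ l ∈ Finset.range j, (((m * n : ℕ):ℝ) + k * c + c * l)) /
        (j.factorial : ℝ) * (x / n) ^ j *
        (1 + c * (x / n)) ^ (-((((m * n : ℕ):ℝ) + k * c) / c + (j:ℝ))) ≤
        (∏ l ∈ Finset.range j, (((m * n : ℕ):ℝ) + k * c + c * l)) /
        (j.factorial : ℝ) * (x / ((n:ℝ) + c * x)) ^ j := by
      rw [hsplit, hbj, ← mul_assoc]
      have hbjnn : (0:ℝ) ≤ ((1 + c * (x / n)) ^ j)⁻¹ :=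
        inv_nonneg.mpr (pow_nonneg hb0.le j)
      have h1 : (∏ l ∈ Finset.range j, (((m * n : ℕ):ℝ) + k * c + c * l)) /
          (j.factorial : ℝ) * (x / n) ^ j *
          (1 + c * (x / n)) ^ (-((((m * n : ℕ):ℝ) + k * c) / c)) *
          ((1 + c * (x / n)) ^ j)⁻¹ ≤
          (∏ l ∈ Finset.range j, (((m * n : ℕ):ℝ) + k * c + c * l)) /
          (j.factorial : ℝ) * (x / n) ^ j * ((1 + c * (x / n)) ^ j)⁻¹ := by
        have := mul_le_mul_of_nonneg_left hrpow1 hQnn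
        have h2 := mul_le_mul_of_nonneg_right this hbjnn
        simpa [mul_one] using h2
      refine h1.trans (le_of_eq ?_)
      rw [mul_assoc]
      congr 1
      rw [← inv_pow, ← mul_pow]
      congr 1
      have hbne : (1 + c * (x / n)) ≠ 0 := hb0.ne'
      have hne : (n:ℝ) ≠ 0 := hn0.ne'
      have hncxne : (n:ℝ) + c * x ≠ 0 := hncx.ne'
      field_simp
    -- Step 2: rewrite as a product of factors a_l
    have hfact : (∏ l ∈ Finset.range j, ((l:ℝ)+1)) = (j.factorial : ℝ) := by
      push_cast [← Finset.prod_range_add_one_eq_factorial]; rfl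
    have hEqprod : (∏ l ∈ Finset.range j, (((m * n : ℕ):ℝ) + k * c + c * l)) /
        (j.factorial : ℝ) * (x / ((n:ℝ) + c * x)) ^ j =
        ∏ l ∈ Finset.range j,
          ((((m * n : ℕ):ℝ) + k * c + c * l) * x / (((n:ℝ) + c * x) * ((l:ℝ) + 1))) := by
      rw [← hfact]
      rw [show (x / ((n:ℝ) + c * x)) ^ j =
        ∏ _l ∈ Finset.range j, (x / ((n:ℝ) + c * x)) by
          rw [Finset.prod_const, Finset.card_range]]
      rw [← Finset.prod_div_distrib, ← Finset.prod_mul_distrib]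
      refine Finset.prod_congr rfl fun l _ => ?_
      rw [div_mul_div_comm, mul_comm ((l:ℝ)+1) ((n:ℝ)+c*x)]
    -- Step 3: bound each factor
    have hL0ge : 4 * ((m:ℝ) * x) ≤ (L0:ℝ) := Nat.le_ceil _
    have hNge : 4 * (((k:ℝ) + 1) * c * x) ≤ (N:ℝ) := by
      refine le_trans (Nat.le_ceil _) ?_
      exact Nat.cast_le.mpr (le_max_right 1 ⌈4 * (((k:ℝ) + 1) * c * x)⌉₊)
    have hbound_l : ∀ l : ℕ, (((m * n : ℕ):ℝ) + k * c + c * l) * x /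
        (((n:ℝ) + c * x) * ((l:ℝ) + 1)) ≤
        (m:ℝ)*x/((l:ℝ)+1) + ((k:ℝ)+1)*c*x/(n:ℝ) := by
      intro l
      have hl1 : (0:ℝ) < (l:ℝ) + 1 := by positivity
      have hl0 : (0:ℝ) ≤ (l:ℝ) := Nat.cast_nonneg l
      have hcast : ((m * n : ℕ):ℝ) = (m:ℝ) * (n:ℝ) := by push_cast; ring
      have hstep_a : (((m * n : ℕ):ℝ) + k * c + c * l) * x /
          (((n:ℝ) + c * x) * ((l:ℝ) + 1)) ≤
          (((m * n : ℕ):ℝ) + k * c + c * l) * x / ((n:ℝ) * ((l:ℝ) + 1)) := by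
        apply div_le_div_of_nonneg_left (mul_nonneg (hraw l) hx) (by positivity)
        have hcx : (0:ℝ) ≤ c * x := mul_nonneg hc0 hx
        apply mul_le_mul_of_nonneg_right (by linarith) hl1.le
      have hsplit_b : (((m * n : ℕ):ℝ) + k * c + c * l) * x / ((n:ℝ) * ((l:ℝ) + 1)) =
          (m:ℝ)*x/((l:ℝ)+1) + (((k:ℝ)*c + c*(l:ℝ))*x)/((n:ℝ)*((l:ℝ)+1)) := by
        rw [hcast]
        field_simp
        ring
      have hstep_c : (((k:ℝ)*c + c*(l:ℝ))*x)/((n:ℝ)*((l:ℝ)+1)) ≤ ((k:ℝ)+1)*c*x/(n:ℝ) := by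
        have e1 : (((k:ℝ)*c + c*(l:ℝ))/((l:ℝ)+1))*(x/(n:ℝ)) =
            (((k:ℝ)*c + c*(l:ℝ))*x)/((n:ℝ)*((l:ℝ)+1)) := by
          rw [div_mul_div_comm, mul_comm ((l:ℝ)+1) (n:ℝ)]
        have e2 : (((k:ℝ)+1)*c)*(x/(n:ℝ)) = ((k:ℝ)+1)*c*x/(n:ℝ) := by ring
        rw [← e1, ← e2]
        apply mul_le_mul_of_nonneg_right _ (div_nonneg hx hn0.le)
        rw [div_le_iff₀ hl1]
        nlinarith [mul_nonneg (mul_nonneg hk0 hc0) hl0]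
      calc (((m * n : ℕ):ℝ) + k * c + c * l) * x / (((n:ℝ) + c * x) * ((l:ℝ) + 1))
          ≤ (((m * n : ℕ):ℝ) + k * c + c * l) * x / ((n:ℝ) * ((l:ℝ) + 1)) := hstep_a
        _ = (m:ℝ)*x/((l:ℝ)+1) + (((k:ℝ)*c + c*(l:ℝ))*x)/((n:ℝ)*((l:ℝ)+1)) := hsplit_b
        _ ≤ (m:ℝ)*x/((l:ℝ)+1) + ((k:ℝ)+1)*c*x/(n:ℝ) := by linarith
    have hfac_le : ∀ l : ℕ, (((m * n : ℕ):ℝ) + k * c + c * l) * x /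
        (((n:ℝ) + c * x) * ((l:ℝ) + 1)) ≤
        (if l < L0 then 2*B else 1) * (1/2 : ℝ) := by
      intro l
      refine (hbound_l l).trans ?_
      by_cases hl : l < L0
      · simp only [hl, if_pos]
        have h1 : (m:ℝ)*x/((l:ℝ)+1) ≤ (m:ℝ)*x :=
          div_le_self hmx0 (by linarith [(Nat.cast_nonneg l : (0:ℝ) ≤ (l:ℝ))])
        have h2 : ((k:ℝ)+1)*c*x/(n:ℝ) ≤ ((k:ℝ)+1)*c*x := div_le_self hkcx0 hn1
        rw [hBdef]
        linarith
      · rw [if_neg hl, one_mul]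
        have hlL : (L0:ℝ) ≤ (l:ℝ) := by exact_mod_cast not_lt.mp hl
        have h1 : (m:ℝ)*x/((l:ℝ)+1) ≤ 1/4 := by
          rw [div_le_iff₀ (by positivity)]
          linarith
        have h2 : ((k:ℝ)+1)*c*x/(n:ℝ) ≤ 1/4 := by
          rw [div_le_iff₀ hn0]
          linarith
        linarith
    have hfac_nn : ∀ l ∈ Finset.range j, (0:ℝ) ≤ (((m * n : ℕ):ℝ) + k * c + c * l) * x /
        (((n:ℝ) + c * x) * ((l:ℝ) + 1)) := by
      intro l _
      apply div_nonneg (mul_nonneg (hraw l) hx)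
      positivity
    have hprod_le : ∏ l ∈ Finset.range j, ((((m * n : ℕ):ℝ) + k * c + c * l) * x /
        (((n:ℝ) + c * x) * ((l:ℝ) + 1))) ≤
        ∏ l ∈ Finset.range j, ((if l < L0 then 2*B else 1) * (1/2 : ℝ)) :=
      Finset.prod_le_prod hfac_nn fun l _ => hfac_le l
    have hprod_d : ∏ l ∈ Finset.range j, ((if l < L0 then 2*B else 1) * (1/2 : ℝ)) ≤
        (2*B)^L0 * (1/2:ℝ)^j := by
      rw [Finset.prod_mul_distrib, Finset.prod_const, Finset.card_range]
      have hite : ∏ l ∈ Finset.range j, (if l < L0 then 2*B else 1) ≤ (2*B)^L0 := by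
        rw [← Finset.prod_filter]
        rw [Finset.prod_const]
        apply pow_le_pow_right₀ h2B
        refine le_trans (Finset.card_le_card
          (fun l hl => Finset.mem_range.mpr (Finset.mem_filter.mp hl).2)) ?_
        simp [Finset.card_range]
      have hpow : (0:ℝ) ≤ (1/2:ℝ)^j := by positivity
      exact mul_le_mul_of_nonneg_right hite hpow
    -- assemble everything
    have hW_le : (∏ l ∈ Finset.range j, (((m * n : ℕ):ℝ) + k * c + c * l)) /
        (j.factorial : ℝ) * (x / n) ^ j *
        (1 + c * (x / n)) ^ (-((((m * n : ℕ):ℝ) + k * c) / c + (j:ℝ))) ≤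
        (2*B)^L0 * (1/2:ℝ)^j := by
      refine hstep1.trans ?_
      rw [hEqprod]
      exact hprod_le.trans hprod_d
    have hargmem : (n : ℝ) * ((2 * (j:ℝ) + k) * ρ + k) /
        (2 * (((m * n : ℕ):ℝ) * ρ - k * c)) ∈ Set.Ici (0:ℝ) := by
      have hp0 : (0:ℝ) ≤ ((2*(j:ℝ)+k)*ρ+k) := by positivity
      refine Set.mem_Ici.mpr (div_nonneg (mul_nonneg hn0.le hp0) ?_)
      have hmnρ : (m:ℝ)*ρ ≤ (m:ℝ)*(n:ℝ)*ρ := by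
        nlinarith [mul_nonneg (mul_nonneg (by linarith : (0:ℝ) ≤ (m:ℝ)) hρ.le)
          (by linarith : (0:ℝ) ≤ (n:ℝ) - 1)]
      have hcast : ((m * n : ℕ):ℝ) = (m:ℝ) * (n:ℝ) := by push_cast; ring
      rw [hcast]
      linarith
    rw [Real.norm_eq_abs, abs_mul, abs_of_nonneg hWnn]
    calc |f ((n : ℝ) * ((2 * (j:ℝ) + k) * ρ + k) / (2 * (((m * n : ℕ):ℝ) * ρ - k * c)))| *
          ((∏ l ∈ Finset.range j, (((m * n : ℕ):ℝ) + k * c + c * l)) / (j.factorial : ℝ) *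
            (x / n) ^ j *
            (1 + c * (x / n)) ^ (-((((m * n : ℕ):ℝ) + k * c) / c + (j:ℝ))))
        ≤ M' * ((∏ l ∈ Finset.range j, (((m * n : ℕ):ℝ) + k * c + c * l)) / (j.factorial : ℝ) *
            (x / n) ^ j *
            (1 + c * (x / n)) ^ (-((((m * n : ℕ):ℝ) + k * c) / c + (j:ℝ)))) :=
          mul_le_mul_of_nonneg_right (hMle _ hargmem) hWnn
      _ ≤ M' * ((2*B)^L0 * (1/2:ℝ)^j) := mul_le_mul_of_nonneg_left hW_le hM'0
end

section
/- Let a ≥ 0, m ∈ ℕ with m ≥ 1, and x ≥ 0. Then for every bounded continuous f : [0,∞) → ℝ, lim_{n→∞} Σ_{k=0}^{∞} e^{−a(x/n)/(1+x/n)} · ( Σ_{i=0}^{k} C(k,i) (∏_{l=0}^{i−1}(mn+l)) a^{k−i} ) / k! · (x/n)^k / (1 + x/n)^{mn+k} · f(k/m) = Σ_{k=0}^{∞} e^{−mx}(mx)^k/k! · f(k/m); that is, lim_{n→∞} Q_{mn}^{a}( f(nt); x/n ) = B_m^{[0]}( f(t); x ). -/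
open Filter Topology Finset

private lemma hasSum_poisson (c : ℝ) :
    HasSum (fun j : ℕ => Real.exp (-c) * c ^ j / (j.factorial : ℝ)) 1 := by
  have h := (NormedSpace.expSeries_div_hasSum_exp c).mul_left (Real.exp (-c))
  rw [← Real.exp_eq_exp_ℝ] at h
  have : Real.exp (-c) * Real.exp c = 1 := by
    rw [← Real.exp_add]; simp
  rw [this] at h
  exact h.congr_fun (fun j => by rw [mul_div_assoc])

private lemma prod_range_cast_eq_ascFactorial (N i : ℕ) :
    (∏ l ∈ Finset.range i, ((N : ℝ) + l)) = (N.ascFactorial i : ℝ) := by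
  induction i with
  | zero => simp
  | succ i ih => rw [Finset.prod_range_succ, ih, Nat.ascFactorial_succ]; push_cast; ring

private lemma hasSum_baskakov (N : ℕ) {y : ℝ} (hy : 0 ≤ y) :
    HasSum (fun i : ℕ =>
      (∏ l ∈ Finset.range i, ((N : ℝ) + l)) / (i.factorial : ℝ) *
        (y ^ i / (1 + y) ^ (N + i))) 1 := by
  have hy1 : (0:ℝ) < 1 + y := by linarith
  set z : ℝ := y / (1 + y) with hz
  have hz0 : 0 ≤ z := div_nonneg hy hy1.le
  have hz1 : z < 1 := by
    rw [hz, div_lt_one hy1]; linarith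
  have h1z : 1 - z = 1 / (1 + y) := by rw [hz]; field_simp; ring
  have hterm : ∀ i : ℕ, y ^ i / (1 + y) ^ (N + i) = z ^ i * (1 - z) ^ N := by
    intro i
    rw [h1z, hz, div_pow, div_pow, one_pow, pow_add, div_mul_div_comm, mul_one,
      mul_comm ((1+y)^i)]
  rcases Nat.eq_zero_or_pos N with hN | hN
  · subst hN
    have h0 : HasSum (fun i : ℕ => if i = 0 then (1:ℝ) else 0) 1 := by
      simpa using hasSum_ite_eq (0 : ℕ) (1:ℝ)
    refine h0.congr_fun fun i => ?_
    rcases Nat.eq_zero_or_pos i with hi | hi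
    · subst hi; simp
    · have hp : (∏ l ∈ Finset.range i, (((0:ℕ) : ℝ) + l)) = 0 := by
        apply Finset.prod_eq_zero (Finset.mem_range.2 hi); simp
      rw [hp, if_neg (by omega : ¬ i = 0)]; simp
  · obtain ⟨K, rfl⟩ : ∃ K, N = K + 1 := ⟨N - 1, by omega⟩
    have hch : ∀ i : ℕ, (∏ l ∈ Finset.range i, (((K+1:ℕ) : ℝ) + l)) / (i.factorial : ℝ)
        = ((i + K).choose K : ℝ) := by
      intro i
      rw [prod_range_cast_eq_ascFactorial]
      rw [Nat.ascFactorial_eq_factorial_mul_choose]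
      have : (K + i).choose i = (i + K).choose K := by
        rw [Nat.add_comm K i, ← Nat.choose_symm (Nat.le_add_left K i)]
        congr 1
        omega
      rw [this]
      push_cast
      rw [mul_comm, mul_div_assoc, div_self (by exact_mod_cast i.factorial_ne_zero), mul_one]
    have hzn : ‖z‖ < 1 := by rw [Real.norm_eq_abs, abs_of_nonneg hz0]; exact hz1
    have hgeo := (hasSum_choose_mul_geometric_of_norm_lt_one K hzn).mul_right ((1-z)^(K+1))
    have h1 : 1 / (1 - z) ^ (K + 1) * (1 - z) ^ (K + 1) = 1 := by
      have : (1 - z) ≠ 0 := by rw [h1z]; positivity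
      field_simp
    rw [h1] at hgeo
    refine hgeo.congr_fun fun i => ?_
    rw [hterm, hch]
    ring

private lemma hasSum_q (a : ℝ) (ha : 0 ≤ a) (N : ℕ) {y : ℝ} (hy : 0 ≤ y) :
    HasSum (fun k : ℕ =>
      Real.exp (-(a * y / (1 + y))) *
        ((∑ i ∈ Finset.range (k + 1),
            (k.choose i : ℝ) * (∏ l ∈ Finset.range i, ((N : ℝ) + l)) * a ^ (k - i)) /
          (k.factorial : ℝ)) *
        (y ^ k / (1 + y) ^ (N + k))) 1 := by
  have hy1 : (0:ℝ) < 1 + y := by linarith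
  set c : ℝ := a * y / (1 + y) with hc
  have hc0 : 0 ≤ c := by positivity
  set b : ℕ → ℝ := fun i =>
    (∏ l ∈ Finset.range i, ((N : ℝ) + l)) / (i.factorial : ℝ) * (y ^ i / (1 + y) ^ (N + i))
    with hbdef
  set p : ℕ → ℝ := fun j => Real.exp (-c) * c ^ j / (j.factorial : ℝ) with hpdef
  have hb : HasSum b 1 := hasSum_baskakov N hy
  have hp : HasSum p 1 := hasSum_poisson c
  have hbn : ∀ i, 0 ≤ b i := by
    intro i
    have : 0 ≤ (∏ l ∈ Finset.range i, ((N : ℝ) + l)) :=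
      Finset.prod_nonneg fun l _ => by positivity
    positivity
  have hpn : ∀ j, 0 ≤ p j := fun j => by positivity
  have hbs : Summable fun i => ‖b i‖ := by
    refine hb.summable.congr fun i => ?_
    rw [Real.norm_eq_abs, abs_of_nonneg (hbn i)]
  have hps : Summable fun j => ‖p j‖ := by
    refine hp.summable.congr fun j => ?_
    rw [Real.norm_eq_abs, abs_of_nonneg (hpn j)]
  have htsum : ∑' k, (∑ i ∈ Finset.range (k + 1), b i * p (k - i)) = 1 := by
    have h := tsum_mul_tsum_eq_tsum_sum_range_of_summable_norm hbs hps
    rw [hb.tsum_eq, hp.tsum_eq, one_mul] at h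
    exact h.symm
  have hsum : Summable (fun k => ∑ i ∈ Finset.range (k + 1), b i * p (k - i)) :=
    (summable_norm_sum_mul_range_of_summable_norm hbs hps).of_norm
  have hkey : ∀ k : ℕ, (∑ i ∈ Finset.range (k + 1), b i * p (k - i)) =
      Real.exp (-(a * y / (1 + y))) *
        ((∑ i ∈ Finset.range (k + 1),
            (k.choose i : ℝ) * (∏ l ∈ Finset.range i, ((N : ℝ) + l)) * a ^ (k - i)) /
          (k.factorial : ℝ)) *
        (y ^ k / (1 + y) ^ (N + k)) := by
    intro k
    rw [Finset.sum_div, Finset.mul_sum, Finset.sum_mul]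
    refine Finset.sum_congr rfl fun i hi => ?_
    have hik : i ≤ k := by simpa [Nat.lt_succ_iff] using Finset.mem_range.mp hi
    obtain ⟨j, rfl⟩ : ∃ j, k = i + j := ⟨k - i, by omega⟩
    have hji : i + j - i = j := by omega
    rw [hji]
    simp only [hbdef, hpdef, hc]
    have hchn := Nat.choose_mul_factorial_mul_factorial (Nat.le_add_right i j)
    rw [Nat.add_sub_cancel_left] at hchn
    have hch : ((i + j).choose i : ℝ) * (i.factorial : ℝ) * (j.factorial : ℝ)
        = ((i + j).factorial : ℝ) := by exact_mod_cast congrArg (Nat.cast (R := ℝ)) hchn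
    have hfi : (i.factorial : ℝ) ≠ 0 := by exact_mod_cast i.factorial_ne_zero
    have hfj : (j.factorial : ℝ) ≠ 0 := by exact_mod_cast j.factorial_ne_zero
    have hfk : (((i + j).factorial) : ℝ) ≠ 0 := by exact_mod_cast (i + j).factorial_ne_zero
    have hy0 : (1 + y) ≠ 0 := ne_of_gt hy1
    have hpy : (1 + y) ^ (N + (i + j)) = (1 + y) ^ (N + i) * (1 + y) ^ j := by
      rw [← pow_add]; congr 1; omega
    have hyy : y ^ (i + j) = y ^ i * y ^ j := pow_add y i j
    have hchoose : ((i + j).choose i : ℝ) = ((i + j).factorial : ℝ) /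
        ((i.factorial : ℝ) * (j.factorial : ℝ)) := by
      rw [eq_div_iff (mul_ne_zero hfi hfj)]
      linear_combination hch
    rw [hpy, hyy, div_pow, mul_pow, hchoose]
    field_simp
  have H : HasSum (fun k => ∑ i ∈ Finset.range (k + 1), b i * p (k - i)) 1 :=
    (Summable.hasSum_iff hsum).2 htsum
  exact H.congr_fun fun k => (hkey k).symm


private lemma tendsto_R (m : ℕ) (hm : 1 ≤ m) (x : ℝ) (i k : ℕ) (hik : i ≤ k) :
    Tendsto (fun n : ℕ => (∏ l ∈ Finset.range i, (((m * n : ℕ) : ℝ) + l)) * (x / n) ^ k)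
      atTop (𝓝 (if i = k then (m : ℝ) ^ k * x ^ k else 0)) := by
  have hlim1 : Tendsto (fun n : ℕ => ∏ l ∈ Finset.range i, ((m : ℝ) + l * (1 / n)))
      atTop (𝓝 ((m : ℝ) ^ i)) := by
    have : Tendsto (fun n : ℕ => ∏ l ∈ Finset.range i, ((m : ℝ) + l * (1 / n)))
        atTop (𝓝 (∏ l ∈ Finset.range i, ((m : ℝ) + l * 0))) := by
      apply tendsto_finset_prod
      intro l _
      exact tendsto_const_nhds.add (tendsto_one_div_atTop_nhds_zero_nat.const_mul _)
    simpa using this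
  have hlim2 : Tendsto (fun n : ℕ => x ^ k * ((1 : ℝ) / n) ^ (k - i))
      atTop (𝓝 (if i = k then x ^ k else 0)) := by
    rcases eq_or_ne i k with h | h
    · subst h; simp
    · rw [if_neg h]
      have hki : k - i ≠ 0 := by omega
      have : Tendsto (fun n : ℕ => ((1 : ℝ) / n) ^ (k - i)) atTop (𝓝 ((0:ℝ) ^ (k - i))) :=
        tendsto_one_div_atTop_nhds_zero_nat.pow _
      rw [zero_pow hki] at this
      simpa using this.const_mul (x ^ k)
  have hmain := hlim1.mul hlim2
  have hval : (m:ℝ) ^ i * (if i = k then x ^ k else 0) = (if i = k then (m:ℝ) ^ k * x ^ k else 0) := by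
    rcases eq_or_ne i k with h | h
    · subst h; simp
    · simp [h]
  rw [hval] at hmain
  apply hmain.congr'
  filter_upwards [eventually_ge_atTop 1] with n hn
  have hn0 : ((n : ℝ)) ≠ 0 := by positivity
  have h1 : ∀ l : ℕ, (m : ℝ) + l * (1 / n) = (((m * n : ℕ) : ℝ) + l) * (1 / n) := by
    intro l; push_cast; field_simp
  calc (∏ l ∈ Finset.range i, ((m : ℝ) + l * (1 / n))) * (x ^ k * ((1:ℝ) / n) ^ (k - i))
      = (∏ l ∈ Finset.range i, ((((m * n : ℕ) : ℝ) + l) * (1 / n))) * (x ^ k * ((1:ℝ)/n) ^ (k - i)) := by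
        rw [Finset.prod_congr rfl fun l _ => h1 l]
    _ = (∏ l ∈ Finset.range i, (((m * n : ℕ) : ℝ) + l)) * ((1/n) ^ i * (x ^ k * ((1:ℝ)/n) ^ (k-i))) := by
        rw [Finset.prod_mul_distrib, Finset.prod_const, Finset.card_range]; ring
    _ = (∏ l ∈ Finset.range i, (((m * n : ℕ) : ℝ) + l)) * (x / n) ^ k := by
        congr 1
        have h2 : ((1:ℝ)/n) ^ i * ((1:ℝ)/n) ^ (k - i) = ((1:ℝ)/n) ^ k := by
          rw [← pow_add]; congr 1; omega
        calc ((1:ℝ)/n) ^ i * (x ^ k * ((1:ℝ)/n) ^ (k-i))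
            = x ^ k * (((1:ℝ)/n) ^ i * ((1:ℝ)/n) ^ (k-i)) := by ring
          _ = x ^ k * ((1:ℝ)/n) ^ k := by rw [h2]
          _ = (x / n) ^ k := by rw [div_pow, div_pow, one_pow]; ring

private lemma tendsto_term (a x : ℝ) (m : ℕ) (hm : 1 ≤ m) (k : ℕ) :
    Tendsto (fun n : ℕ =>
      Real.exp (-(a * (x / n) / (1 + x / n))) *
        ((∑ i ∈ Finset.range (k + 1),
            (k.choose i : ℝ) * (∏ l ∈ Finset.range i, (((m * n : ℕ) : ℝ) + l)) * a ^ (k - i)) /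
          (k.factorial : ℝ)) *
        ((x / n) ^ k / (1 + x / n) ^ (m * n + k)))
      atTop (𝓝 (Real.exp (-(m * x)) * (m * x) ^ k / (k.factorial : ℝ))) := by
  have h0 : Tendsto (fun n : ℕ => x / n) atTop (𝓝 0) := tendsto_const_div_atTop_nhds_zero_nat x
  -- exp factor
  have hE : Tendsto (fun n : ℕ => Real.exp (-(a * (x / n) / (1 + x / n)))) atTop (𝓝 1) := by
    have hc : ContinuousAt (fun t : ℝ => Real.exp (-(a * t / (1 + t)))) 0 := by
      apply Real.continuous_exp.continuousAt.comp
      apply ContinuousAt.neg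
      exact (continuousAt_const.mul continuousAt_id).div
        (continuousAt_const.add continuousAt_id) (by norm_num)
    have := hc.tendsto.comp h0
    simpa [Function.comp_def] using this
  -- (1 + x/n) ^ (m n) factor
  have hP : Tendsto (fun n : ℕ => (1 + x / n) ^ (m * n)) atTop (𝓝 (Real.exp (m * x))) := by
    have h1 := Real.tendsto_one_add_div_pow_exp (m * x)
    have h2 : Tendsto (fun n : ℕ => m * n) atTop atTop :=
      tendsto_atTop_mono (fun n => Nat.le_mul_of_pos_left n (by omega)) tendsto_id
    have h3 := h1.comp h2
    apply h3.congr
    intro n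
    simp only [Function.comp_apply]
    congr 2
    push_cast
    rw [mul_div_mul_left _ _ (Nat.cast_ne_zero.2 (by omega) : (m:ℝ) ≠ 0)]
  -- (1 + x/n) ^ k factor
  have hPk : Tendsto (fun n : ℕ => (1 + x / n) ^ k) atTop (𝓝 1) := by
    have h1 : Tendsto (fun n : ℕ => 1 + x / n) atTop (𝓝 (1 + 0)) := tendsto_const_nhds.add h0
    have := h1.pow k
    simpa using this
  -- numerator sum
  have hU : Tendsto (fun n : ℕ =>
      ∑ i ∈ Finset.range (k + 1),
        (k.choose i : ℝ) * a ^ (k - i) *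
          ((∏ l ∈ Finset.range i, (((m * n : ℕ) : ℝ) + l)) * (x / n) ^ k))
      atTop (𝓝 ((m * x) ^ k)) := by
    have hsum : Tendsto (fun n : ℕ =>
        ∑ i ∈ Finset.range (k + 1),
          (k.choose i : ℝ) * a ^ (k - i) *
            ((∏ l ∈ Finset.range i, (((m * n : ℕ) : ℝ) + l)) * (x / n) ^ k))
        atTop (𝓝 (∑ i ∈ Finset.range (k + 1),
          (k.choose i : ℝ) * a ^ (k - i) * (if i = k then (m : ℝ) ^ k * x ^ k else 0))) := by
      apply tendsto_finset_sum
      intro i hi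
      exact (tendsto_R m hm x i k (by simpa [Nat.lt_succ_iff] using Finset.mem_range.mp hi)).const_mul _
    have hval : (∑ i ∈ Finset.range (k + 1),
        (k.choose i : ℝ) * a ^ (k - i) * (if i = k then (m : ℝ) ^ k * x ^ k else 0))
        = (m * x) ^ k := by
      rw [Finset.sum_eq_single k]
      · simp [mul_pow]
      · intro i _ hik; simp [hik]
      · intro h; exact absurd (Finset.self_mem_range_succ k) h
    rwa [hval] at hsum
  -- denominator
  have hD : Tendsto (fun n : ℕ => ((1 + x / n) ^ (m * n) * (1 + x / n) ^ k)⁻¹)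
      atTop (𝓝 ((Real.exp (m * x) * 1)⁻¹)) :=
    (hP.mul hPk).inv₀ (by positivity)
  have hmain := (hE.mul ((hU.div_const (k.factorial : ℝ)))).mul hD
  have hlim : (1 : ℝ) * ((m * x) ^ k / (k.factorial : ℝ)) * (Real.exp (m * x) * 1)⁻¹
      = Real.exp (-(m * x)) * (m * x) ^ k / (k.factorial : ℝ) := by
    rw [Real.exp_neg]; ring
  rw [hlim] at hmain
  apply hmain.congr
  intro n
  have hs : (∑ i ∈ Finset.range (k + 1), (k.choose i : ℝ) * a ^ (k - i) *
        ((∏ l ∈ Finset.range i, (((m * n : ℕ) : ℝ) + l)) * (x / n) ^ k))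
      = (∑ i ∈ Finset.range (k + 1), (k.choose i : ℝ) *
          (∏ l ∈ Finset.range i, (((m * n : ℕ) : ℝ) + l)) * a ^ (k - i)) * (x / n) ^ k := by
    rw [Finset.sum_mul]; exact Finset.sum_congr rfl fun i _ => by ring
  rw [pow_add, hs]
  ring


private noncomputable def wfun (a x : ℝ) (m : ℕ) (n : ℕ) (k : ℕ) : ℝ :=
  Real.exp (-(a * (x / n) / (1 + x / n))) *
    ((∑ i ∈ Finset.range (k + 1),
        (k.choose i : ℝ) * (∏ l ∈ Finset.range i, (((m * n : ℕ) : ℝ) + l)) *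
          a ^ (k - i)) / (k.factorial : ℝ)) *
      ((x / n) ^ k / (1 + x / n) ^ (m * n + k))

private noncomputable def pifun (m : ℕ) (x : ℝ) (k : ℕ) : ℝ :=
  Real.exp (-(m * x)) * (m * x) ^ k / (k.factorial : ℝ)

/-- **Convergence of the rescaled operators `Q_n^a` to the Szász–Mirakjan operator:**
for `a ≥ 0`, `m ≥ 1`, `x ≥ 0` and bounded continuous `f : [0,∞) → ℝ`,
`lim_{n→∞} Q_{mn}^a(f(nt); x/n) = B_m^{[0]}(f(t); x)`. -/
theorem stmt_6 (a : ℝ) (ha : 0 ≤ a) (m : ℕ) (hm : 1 ≤ m) (x : ℝ) (hx : 0 ≤ x)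
    (f : ℝ → ℝ) (hf : ContinuousOn f (Set.Ici 0))
    (hfb : ∃ M : ℝ, ∀ t ∈ Set.Ici (0 : ℝ), |f t| ≤ M) :
    Tendsto (fun n : ℕ =>
        ∑' k : ℕ,
          Real.exp (-(a * (x / n) / (1 + x / n))) *
            ((∑ i ∈ Finset.range (k + 1),
                (k.choose i : ℝ) * (∏ l ∈ Finset.range i, (((m * n : ℕ) : ℝ) + l)) *
                  a ^ (k - i)) / (k.factorial : ℝ)) *
              ((x / n) ^ k / (1 + x / n) ^ (m * n + k)) * f (k / m))
      atTop
      (𝓝 (∑' k : ℕ, Real.exp (-(m * x)) * (m * x) ^ k / (k.factorial : ℝ) * f (k / m))) := by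
  obtain ⟨M, hM⟩ := hfb
  have hM0 : 0 ≤ M := le_trans (abs_nonneg _) (hM 0 (Set.mem_Ici.2 le_rfl))
  show Tendsto (fun n : ℕ => ∑' k : ℕ, wfun a x m n k * f (k / m)) atTop
    (𝓝 (∑' k : ℕ, pifun m x k * f (k / m)))
  have hfarg : ∀ k : ℕ, |f ((k : ℝ) / m)| ≤ M := fun k =>
    hM _ (Set.mem_Ici.2 (div_nonneg (Nat.cast_nonneg k) (Nat.cast_nonneg m)))
  have hw : ∀ n : ℕ, HasSum (wfun a x m n) 1 := fun n =>
    hasSum_q a ha (m * n) (div_nonneg hx (Nat.cast_nonneg n))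
  have hπ : HasSum (pifun m x) 1 := hasSum_poisson (m * x)
  have hwnn : ∀ n k, 0 ≤ wfun a x m n k := by
    intro n k
    have hy : (0:ℝ) ≤ x / n := div_nonneg hx (Nat.cast_nonneg n)
    have h1 : (0:ℝ) < 1 + x / n := by linarith
    apply mul_nonneg (mul_nonneg (Real.exp_nonneg _) (div_nonneg ?_ (Nat.cast_nonneg _)))
      (div_nonneg (pow_nonneg hy _) (pow_nonneg h1.le _))
    apply Finset.sum_nonneg; intro i _
    exact mul_nonneg (mul_nonneg (Nat.cast_nonneg _)
      (Finset.prod_nonneg fun l _ => by positivity)) (pow_nonneg ha _)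
  have hπnn : ∀ k, 0 ≤ pifun m x k := fun k =>
    div_nonneg (mul_nonneg (Real.exp_nonneg _)
      (pow_nonneg (mul_nonneg (Nat.cast_nonneg m) hx) _)) (Nat.cast_nonneg _)
  have htdw : ∀ k, Tendsto (fun n : ℕ => wfun a x m n k) atTop (𝓝 (pifun m x k)) :=
    fun k => tendsto_term a x m hm k
  have hmin : Tendsto (fun n : ℕ => ∑' k, min (wfun a x m n k) (pifun m x k)) atTop (𝓝 1) := by
    have h := tendsto_tsum_of_dominated_convergence (𝓕 := atTop)
      (f := fun (n : ℕ) (k : ℕ) => min (wfun a x m n k) (pifun m x k)) (g := pifun m x)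
      (bound := pifun m x) hπ.summable
      (fun k => by
        have := (htdw k).min (tendsto_const_nhds (x := pifun m x k))
        rwa [min_self] at this)
      (Eventually.of_forall fun n k => by
        rw [Real.norm_eq_abs, abs_of_nonneg (le_min (hwnn n k) (hπnn k))]
        exact min_le_right _ _)
    rwa [hπ.tsum_eq] at h
  have hws : ∀ n, Summable (wfun a x m n) := fun n => (hw n).summable
  have hwfs : ∀ n, Summable (fun k => wfun a x m n k * f (k / m)) := by
    intro n
    apply Summable.of_norm_bounded ((hws n).mul_left M)
    intro k
    rw [Real.norm_eq_abs, abs_mul, abs_of_nonneg (hwnn n k), mul_comm M]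
    exact mul_le_mul_of_nonneg_left (hfarg k) (hwnn n k)
  have hπfs : Summable (fun k => pifun m x k * f (k / m)) := by
    apply Summable.of_norm_bounded (hπ.summable.mul_left M)
    intro k
    rw [Real.norm_eq_abs, abs_mul, abs_of_nonneg (hπnn k), mul_comm M]
    exact mul_le_mul_of_nonneg_left (hfarg k) (hπnn k)
  have hmins : ∀ n, Summable (fun k => min (wfun a x m n k) (pifun m x k)) := fun n =>
    Summable.of_nonneg_of_le (fun k => le_min (hwnn n k) (hπnn k))
      (fun k => min_le_right _ _) hπ.summable
  have habs : ∀ n, Summable (fun k => |wfun a x m n k - pifun m x k|) := by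
    intro n
    apply Summable.of_nonneg_of_le (fun k => abs_nonneg _)
      (fun k => ?_) ((hws n).add hπ.summable)
    have h1 := hwnn n k; have h2 := hπnn k
    exact abs_sub_le_iff.2 ⟨by linarith, by linarith⟩
  have htsabs : ∀ n, ∑' k, |wfun a x m n k - pifun m x k|
      = 2 - 2 * ∑' k, min (wfun a x m n k) (pifun m x k) := by
    intro n
    have hpt : ∀ k, |wfun a x m n k - pifun m x k|
        = (wfun a x m n k + pifun m x k) - 2 * min (wfun a x m n k) (pifun m x k) := by
      intro k
      rcases le_total (wfun a x m n k) (pifun m x k) with h | h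
      · rw [min_eq_left h, abs_of_nonpos (by linarith)]; ring
      · rw [min_eq_right h, abs_of_nonneg (by linarith)]; ring
    rw [tsum_congr hpt, Summable.tsum_sub ((hws n).add hπ.summable) ((hmins n).mul_left 2),
      Summable.tsum_add (hws n) hπ.summable, tsum_mul_left, (hw n).tsum_eq, hπ.tsum_eq]
    ring
  have hbound : ∀ n : ℕ, ‖(∑' k, wfun a x m n k * f (k / m)) - ∑' k, pifun m x k * f (k / m)‖
      ≤ M * (2 - 2 * ∑' k, min (wfun a x m n k) (pifun m x k)) := by
    intro n
    rw [← Summable.tsum_sub (hwfs n) hπfs]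
    have hg : HasSum (fun k => M * |wfun a x m n k - pifun m x k|)
        (M * (2 - 2 * ∑' k, min (wfun a x m n k) (pifun m x k))) := by
      have := (habs n).hasSum.mul_left M
      rwa [htsabs n] at this
    apply tsum_of_norm_bounded hg
    intro k
    rw [Real.norm_eq_abs, ← sub_mul, abs_mul, mul_comm M]
    exact mul_le_mul_of_nonneg_left (hfarg k) (abs_nonneg _)
  have hzero : Tendsto (fun n : ℕ =>
      M * (2 - 2 * ∑' k, min (wfun a x m n k) (pifun m x k))) atTop (𝓝 0) := by
    have h2 : Tendsto (fun n : ℕ =>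
        (2:ℝ) - 2 * ∑' k, min (wfun a x m n k) (pifun m x k)) atTop (𝓝 (2 - 2 * 1)) :=
      tendsto_const_nhds.sub (hmin.const_mul 2)
    have h3 := h2.const_mul M
    have : M * (2 - 2 * 1) = 0 := by ring
    rwa [this] at h3
  rw [← tendsto_sub_nhds_zero_iff]
  exact squeeze_zero_norm hbound hzero
end

section
/- Let m ∈ ℕ with m ≥ 1 and x ≥ 0. Then for every bounded continuous f : [0,∞) → ℝ, lim_{n→∞} (1 + x/n)^{−mn} Σ_{k=0}^{mn} C(mn,k) (x/n)^k f( nk/(mn+1) ) = Σ_{k=0}^{∞} e^{−mx}(mx)^k/k! · f(k/m); that is, lim_{n→∞} H_{mn}( f(nt/(1+t)); x/n ) = B_m^{[0]}( f(t); x ). -/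
open Filter Topology Finset

private lemma bbh_cast_choose (N k : ℕ) (h : k ≤ N) :
    ((N.choose k : ℝ)) * (k.factorial : ℝ) = ∏ i ∈ range k, ((N : ℝ) - i) := by
  have h1 := Nat.descFactorial_eq_factorial_mul_choose N k
  have h2 := Nat.descFactorial_eq_prod_range N k
  have h4 : (k.factorial * N.choose k : ℕ) = ∏ i ∈ range k, (N - i) := by rw [← h1, h2]
  have h3 := congrArg (Nat.cast (R := ℝ)) h4
  push_cast at h3
  rw [mul_comm, h3]
  apply Finset.prod_congr rfl
  intro i hi
  rw [Nat.cast_sub (le_trans (le_of_lt (mem_range.mp hi)) h)]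

private lemma bbh_xdivn (x : ℝ) : Tendsto (fun n : ℕ => x / n) atTop (𝓝 0) :=
  Tendsto.div_atTop tendsto_const_nhds tendsto_natCast_atTop_atTop

/-- **Convergence of rescaled Bleimann–Butzer–Hahn operators to the Szász–Mirakjan
operator:** for `m ≥ 1`, `x ≥ 0` and bounded continuous `f : [0,∞) → ℝ`,
`lim_{n→∞} H_{mn}(f(nt/(1+t)); x/n) = B_m^{[0]}(f(t); x)`. -/
theorem stmt_7 (m : ℕ) (hm : 1 ≤ m) (x : ℝ) (hx : 0 ≤ x)
    (f : ℝ → ℝ) (hf : ContinuousOn f (Set.Ici 0))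
    (hfb : ∃ M : ℝ, ∀ t ∈ Set.Ici (0 : ℝ), |f t| ≤ M) :
    Tendsto (fun n : ℕ =>
        (1 + x / n) ^ (-(m * n : ℤ)) *
          ∑ k ∈ Finset.range (m * n + 1),
            ((m * n).choose k : ℝ) * (x / n) ^ k * f ((n : ℝ) * k / (m * n + 1)))
      atTop
      (𝓝 (∑' k : ℕ, Real.exp (-(m * x)) * (m * x) ^ k / (k.factorial : ℝ) * f (k / m))) := by
  obtain ⟨M, hM⟩ := hfb
  have hM0 : 0 ≤ M := (abs_nonneg _).trans (hM 0 Set.self_mem_Ici)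
  have hmR : (0 : ℝ) < m := by exact_mod_cast hm
  set F : ℕ → ℕ → ℝ := fun n k =>
    if k ≤ m * n then
      (1 + x / n) ^ (-(m * n : ℤ)) *
        (((m * n).choose k : ℝ) * (x / n) ^ k * f ((n : ℝ) * k / (m * n + 1)))
    else 0 with hFdef
  -- exponent rewriting
  have hzpow : ∀ n : ℕ, (1 + x / n) ^ (-(m * n : ℤ)) = (((1 + x / n) ^ n) ^ m)⁻¹ := by
    intro n
    rw [show (-(m * n : ℤ)) = -((m * n : ℕ) : ℤ) by push_cast; ring, zpow_neg, zpow_natCast,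
      pow_mul']
  -- limit of the prefactor
  have hA : Tendsto (fun n : ℕ => (1 + x / n) ^ (-(m * n : ℤ))) atTop
      (𝓝 (Real.exp (-(m * x)))) := by
    have h2 : Tendsto (fun n : ℕ => ((1 + x / n) ^ n) ^ m) atTop (𝓝 (Real.exp x ^ m)) :=
      (Real.tendsto_one_add_div_pow_exp x).pow m
    have h3 := h2.inv₀ (by positivity)
    have he : Real.exp x ^ m = Real.exp (m * x) := by
      rw [← Real.exp_nat_mul]
    rw [Real.exp_neg, ← he]
    exact h3.congr fun n => (hzpow n).symm
  -- pointwise limits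
  have hab : ∀ k : ℕ, Tendsto (fun n => F n k) atTop
      (𝓝 (Real.exp (-(m * x)) * (m * x) ^ k / (k.factorial : ℝ) * f (k / m))) := by
    intro k
    have hB : Tendsto (fun n : ℕ => ((m * n).choose k : ℝ) * (x / n) ^ k) atTop
        (𝓝 ((m * x) ^ k / (k.factorial : ℝ))) := by
      have hprod : Tendsto (fun n : ℕ => (∏ i ∈ range k, ((m : ℝ) * x - i * (x / n)))
          / (k.factorial : ℝ)) atTop (𝓝 ((m * x) ^ k / (k.factorial : ℝ))) := by
        have h1 : Tendsto (fun n : ℕ => ∏ i ∈ range k, ((m : ℝ) * x - i * (x / n))) atTop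
            (𝓝 (∏ _i ∈ range k, (m : ℝ) * x)) := by
          apply tendsto_finset_prod
          intro i _
          simpa using tendsto_const_nhds.sub ((bbh_xdivn x).const_mul (i : ℝ))
        rw [Finset.prod_const, card_range] at h1
        exact h1.div_const _
      refine hprod.congr' ?_
      filter_upwards [eventually_ge_atTop (max 1 k)] with n hn
      have hn1 : 1 ≤ n := le_trans (le_max_left _ _) hn
      have hkn : k ≤ m * n := le_trans (le_trans (le_max_right 1 k) hn)
        (Nat.le_mul_of_pos_left n (by omega))
      have hnR : (n : ℝ) ≠ 0 := by positivity
      have hc := bbh_cast_choose (m * n) k hkn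
      push_cast at hc
      have hfac : (0 : ℝ) < (k.factorial : ℝ) := by positivity
      have hch : ((m * n).choose k : ℝ) = (∏ i ∈ range k, ((m : ℝ) * n - i))
          / (k.factorial : ℝ) := by
        rw [eq_div_iff hfac.ne']; exact hc
      rw [hch, div_mul_eq_mul_div]
      congr 1
      rw [show (x / (n : ℝ)) ^ k = ∏ _i ∈ range k, (x / (n : ℝ)) by
        rw [Finset.prod_const, card_range], ← Finset.prod_mul_distrib]
      apply Finset.prod_congr rfl
      intro i _
      field_simp
    have hCarg : Tendsto (fun n : ℕ => (n : ℝ) * k / (m * n + 1)) atTop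
        (𝓝[Set.Ici 0] ((k : ℝ) / m)) := by
      rw [tendsto_nhdsWithin_iff]
      constructor
      · have h2 : Tendsto (fun n : ℕ => (k : ℝ) / ((m : ℝ) + 1 / n)) atTop
            (𝓝 ((k : ℝ) / m)) := by
          have hd : Tendsto (fun n : ℕ => (m : ℝ) + 1 / n) atTop (𝓝 ((m : ℝ) + 0)) :=
            tendsto_const_nhds.add (bbh_xdivn 1)
          rw [add_zero] at hd
          exact tendsto_const_nhds.div hd (ne_of_gt hmR)
        refine h2.congr' ?_
        filter_upwards [eventually_ge_atTop 1] with n hn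
        have hnR : (n : ℝ) ≠ 0 := by positivity
        field_simp
      · filter_upwards with n
        exact Set.mem_Ici.mpr (by positivity)
    have hC : Tendsto (fun n : ℕ => f ((n : ℝ) * k / (m * n + 1))) atTop (𝓝 (f (k / m))) :=
      (hf ((k : ℝ) / m) (Set.mem_Ici.mpr (by positivity))).tendsto.comp hCarg
    have hall := (hA.mul hB).mul hC
    have heq : Real.exp (-(m * x)) * ((m * x) ^ k / (k.factorial : ℝ)) * f (k / m)
        = Real.exp (-(m * x)) * (m * x) ^ k / (k.factorial : ℝ) * f (k / m) := by ring
    rw [heq] at hall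
    refine hall.congr' ?_
    filter_upwards [eventually_ge_atTop k] with n hn
    have hkn : k ≤ m * n := le_trans hn (Nat.le_mul_of_pos_left n (by omega))
    simp only [hFdef, if_pos hkn]
    ring
  -- uniform bound
  have hbound : ∀ᶠ n in atTop, ∀ k, ‖F n k‖ ≤ M * ((m * x) ^ k / (k.factorial : ℝ)) := by
    filter_upwards [eventually_ge_atTop 1] with n hn k
    have hnR : (0 : ℝ) < n := by exact_mod_cast hn
    have hfac : (0 : ℝ) < (k.factorial : ℝ) := by positivity
    by_cases hk : k ≤ m * n
    · simp only [hFdef, if_pos hk, Real.norm_eq_abs]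
      rw [abs_mul]
      have hA1 : |(1 + x / n) ^ (-(m * n : ℤ))| ≤ 1 := by
        rw [hzpow n, abs_inv, abs_of_nonneg (by positivity)]
        apply inv_le_one_of_one_le₀
        apply one_le_pow₀
        apply one_le_pow₀
        nlinarith [div_nonneg hx (le_of_lt hnR)]
      have hBle : |((m * n).choose k : ℝ) * (x / n) ^ k| ≤ (m * x) ^ k / (k.factorial : ℝ) := by
        rw [abs_of_nonneg (by positivity)]
        rw [le_div_iff₀ hfac]
        have hd : ((m * n).choose k : ℝ) * (k.factorial : ℝ) ≤ ((m * n : ℕ) : ℝ) ^ k := by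
          have := Nat.descFactorial_le_pow (m * n) k
          rw [Nat.descFactorial_eq_factorial_mul_choose] at this
          exact_mod_cast by rw [mul_comm]; exact_mod_cast this
        calc ((m * n).choose k : ℝ) * (x / n) ^ k * (k.factorial : ℝ)
            = ((m * n).choose k : ℝ) * (k.factorial : ℝ) * (x / n) ^ k := by ring
          _ ≤ ((m * n : ℕ) : ℝ) ^ k * (x / n) ^ k := by
              apply mul_le_mul_of_nonneg_right hd (by positivity)
          _ = (((m * n : ℕ) : ℝ) * (x / n)) ^ k := by rw [mul_pow]
          _ = (m * x) ^ k := by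
              congr 1
              push_cast
              field_simp
      have hCle : |f ((n : ℝ) * k / (m * n + 1))| ≤ M :=
        hM _ (Set.mem_Ici.mpr (div_nonneg (by positivity) (by positivity)))
      calc |(1 + x / n) ^ (-(m * n : ℤ))| * |((m * n).choose k : ℝ) * (x / n) ^ k * f ((n : ℝ) * k / (m * n + 1))|
          ≤ 1 * ((m * x) ^ k / (k.factorial : ℝ) * M) := by
            rw [abs_mul (a := ((m * n).choose k : ℝ) * (x / n) ^ k)]
            apply mul_le_mul hA1 (mul_le_mul hBle hCle (abs_nonneg _) (by positivity))
              (by positivity) zero_le_one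
        _ = M * ((m * x) ^ k / (k.factorial : ℝ)) := by ring
    · simp only [hFdef, if_neg hk, norm_zero]
      positivity
  have hsum : Summable (fun k : ℕ => M * ((m * x) ^ k / (k.factorial : ℝ))) :=
    (Real.summable_pow_div_factorial (m * x)).mul_left M
  have key := tendsto_tsum_of_dominated_convergence hsum hab hbound
  refine key.congr fun n => ?_
  rw [tsum_eq_sum (s := range (m * n + 1)) (f := F n)
    (fun k hk => by simp only [hFdef]; rw [if_neg (by simp [mem_range] at hk; omega)])]
  rw [Finset.mul_sum]
  apply Finset.sum_congr rfl
  intro k hk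
  simp only [hFdef]
  rw [if_pos (by simp [mem_range] at hk; omega)]
end

section
/- Let m ∈ ℕ with m ≥ 1 and x ≥ 0. Then for every bounded continuous f : [0,∞) → ℝ, lim_{n→∞} (1 + x/n)^{−mn} Σ_{k=0}^{mn} C(mn,k) (x/n)^k f(k/m) = Σ_{k=0}^{∞} e^{−mx}(mx)^k/k! · f(k/m); that is, lim_{n→∞} H_{mn}( f((mn+1)t/(m(1+t))); x/n ) = B_m^{[0]}( f(t); x ). -/
open Filter Topology

/-- **Convergence of rescaled Bleimann–Butzer–Hahn operators (second modification) to the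
Szász–Mirakjan operator:** for `m ≥ 1`, `x ≥ 0` and bounded continuous `f : [0,∞) → ℝ`,
`lim_{n→∞} H_{mn}(f((mn+1)t/(m(1+t))); x/n) = B_m^{[0]}(f(t); x)`. -/
theorem stmt_8 (m : ℕ) (hm : 1 ≤ m) (x : ℝ) (hx : 0 ≤ x)
    (f : ℝ → ℝ) (hf : ContinuousOn f (Set.Ici 0))
    (hfb : ∃ M : ℝ, ∀ t ∈ Set.Ici (0 : ℝ), |f t| ≤ M) :
    Tendsto (fun n : ℕ =>
        (1 + x / n) ^ (-(m * n : ℤ)) *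
          ∑ k ∈ Finset.range (m * n + 1),
            ((m * n).choose k : ℝ) * (x / n) ^ k * f (k / m))
      atTop
      (𝓝 (∑' k : ℕ, Real.exp (-(m * x)) * (m * x) ^ k / (k.factorial : ℝ) * f (k / m))) := by
  obtain ⟨M, hM⟩ := hfb
  have hM0 : 0 ≤ M := (abs_nonneg _).trans (hM 0 Set.self_mem_Ici)
  set F : ℕ → ℕ → ℝ := fun n k =>
    (1 + x / n) ^ (-(m * n : ℤ)) * (((m * n).choose k : ℝ) * (x / n) ^ k * f (k / m)) with hF
  set g : ℕ → ℝ := fun k => Real.exp (-(m * x)) * (m * x) ^ k / (k.factorial : ℝ) * f (k / m)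
    with hg
  -- domination
  have hsum : Summable (fun k : ℕ => M * ((m * x) ^ k / (k.factorial : ℝ))) :=
    (Real.summable_pow_div_factorial (m * x)).mul_left M
  -- pointwise convergence
  have hpt : ∀ k : ℕ, Tendsto (F · k) atTop (𝓝 (g k)) := by
    intro k
    have h1 : Tendsto (fun n : ℕ => (1 + x / n) ^ n) atTop (𝓝 (Real.exp x)) :=
      Real.tendsto_one_add_div_pow_exp x
    have h2 : Tendsto (fun n : ℕ => (((1 + x / n) ^ n) ^ m)⁻¹) atTop
        (𝓝 ((Real.exp x ^ m)⁻¹)) :=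
      (h1.pow m).inv₀ (by positivity)
    have h3 : Tendsto (fun n : ℕ => ∏ i ∈ Finset.range k, ((m : ℝ) - i / n)) atTop
        (𝓝 ((m : ℝ) ^ k)) := by
      have hpc := Finset.prod_const (b := (m : ℝ)) (s := Finset.range k)
      rw [Finset.card_range] at hpc
      rw [← hpc]
      refine tendsto_finset_prod _ fun i _ => ?_
      simpa using tendsto_const_nhds.sub (tendsto_const_div_atTop_nhds_zero_nat (i : ℝ))
    have h4 : Tendsto (fun n : ℕ =>
        (((1 + x / n) ^ n) ^ m)⁻¹ * ((∏ i ∈ Finset.range k, ((m : ℝ) - i / n)) *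
          x ^ k / (k.factorial : ℝ) * f (k / m))) atTop (𝓝 (g k)) := by
      have := h2.mul ((((h3.mul_const (x ^ k)).div_const (k.factorial : ℝ)).mul_const (f (k / m))))
      convert this using 2
      simp only [hg]
      rw [← Real.exp_nat_mul, ← Real.exp_neg, mul_pow]
      ring
    refine Tendsto.congr' ?_ h4
    filter_upwards [eventually_ge_atTop (max 1 k)] with n hn
    have hn1 : 1 ≤ n := le_of_max_le_left hn
    have hnk : k ≤ n := le_of_max_le_right hn
    have hkmn : k ≤ m * n := hnk.trans (Nat.le_mul_of_pos_left n hm)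
    have hn0 : (n : ℝ) ≠ 0 := Nat.cast_ne_zero.2 (by omega)
    have e1 : (1 + x / n) ^ (-(m * n : ℤ)) = (((1 + x / n) ^ n) ^ m)⁻¹ := by
      rw [zpow_neg, ← pow_mul']
      norm_cast
    have eP : (∏ i ∈ Finset.range k, ((m : ℝ) - i / n))
        = (∏ i ∈ Finset.range k, ((m * n : ℝ) - i)) / (n : ℝ) ^ k := by
      have hcongr : ∀ i ∈ Finset.range k, ((m : ℝ) - i / n) = ((m * n : ℝ) - i) / n := by
        intro i _
        rw [sub_div, mul_div_cancel_right₀ _ hn0]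
      rw [Finset.prod_congr rfl hcongr, Finset.prod_div_distrib, Finset.prod_const,
        Finset.card_range]
    have e2 : (((m * n).choose k : ℝ)) * (x / n) ^ k
        = (∏ i ∈ Finset.range k, ((m : ℝ) - i / n)) * x ^ k / (k.factorial : ℝ) := by
      have hd : (((m * n).descFactorial k : ℝ)) = ∏ i ∈ Finset.range k, ((m * n : ℝ) - i) := by
        rw [Nat.descFactorial_eq_prod_range, Nat.cast_prod]
        refine Finset.prod_congr rfl fun i hi => ?_
        have hi' : i ≤ m * n := le_of_lt ((Finset.mem_range.1 hi).trans_le hkmn)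
        push_cast [Nat.cast_sub hi']
        ring
      have hc : (((m * n).choose k : ℝ)) = (∏ i ∈ Finset.range k, ((m * n : ℝ) - i))
          / (k.factorial : ℝ) := by
        rw [← hd, Nat.descFactorial_eq_factorial_mul_choose]
        push_cast
        field_simp
      rw [hc, div_pow, eP]
      ring
    simp only [hF]
    rw [e1, e2]
  -- bound
  have hbd : ∀ᶠ n in atTop, ∀ k : ℕ, ‖F n k‖ ≤ M * ((m * x) ^ k / (k.factorial : ℝ)) := by
    filter_upwards [eventually_ge_atTop 1] with n hn1 k
    have hn0 : (n : ℝ) ≠ 0 := Nat.cast_ne_zero.2 (by omega)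
    have hn0' : (0:ℝ) < n := by exact_mod_cast Nat.pos_of_ne_zero (by omega)
    have hb1 : (1:ℝ) ≤ 1 + x / n := le_add_of_nonneg_right (div_nonneg hx hn0'.le)
    have hz : (0:ℝ) ≤ (1 + x / n) ^ (-(m * n : ℤ)) := zpow_nonneg (by positivity) _
    have hz1 : (1 + x / n) ^ (-(m * n : ℤ)) ≤ 1 := by
      rw [zpow_neg]
      exact inv_le_one_of_one_le₀ (one_le_zpow₀ hb1 (by exact_mod_cast (m * n).zero_le))
    have hch : (((m * n).choose k : ℝ)) * (x / n) ^ k ≤ (m * x) ^ k / (k.factorial : ℝ) := by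
      have h1 : (((m * n).choose k : ℝ)) ≤ ((m * n : ℕ) : ℝ) ^ k / (k.factorial : ℝ) :=
        Nat.choose_le_pow_div k (m * n)
      have h2 : ((m * n : ℕ) : ℝ) ^ k / (k.factorial : ℝ) * (x / n) ^ k
          = (m * x) ^ k / (k.factorial : ℝ) := by
        rw [div_mul_eq_mul_div, ← mul_pow]
        congr 2
        push_cast
        field_simp
      calc (((m * n).choose k : ℝ)) * (x / n) ^ k
          ≤ ((m * n : ℕ) : ℝ) ^ k / (k.factorial : ℝ) * (x / n) ^ k := by
            exact mul_le_mul_of_nonneg_right h1 (by positivity)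
        _ = (m * x) ^ k / (k.factorial : ℝ) := h2
    have hfk : |f (k / m)| ≤ M := hM _ (Set.mem_Ici.2 (by positivity))
    have hcn : (0:ℝ) ≤ (((m * n).choose k : ℝ)) * (x / n) ^ k := by positivity
    calc ‖F n k‖ = (1 + x / n) ^ (-(m * n : ℤ)) * ((((m * n).choose k : ℝ)) * (x / n) ^ k)
          * |f (k / m)| := by
          simp only [hF, Real.norm_eq_abs]
          rw [abs_mul, abs_mul, abs_of_nonneg hz, abs_of_nonneg hcn]
          ring
      _ ≤ 1 * ((m * x) ^ k / (k.factorial : ℝ)) * M := by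
          refine mul_le_mul (mul_le_mul hz1 hch hcn (by norm_num)) hfk (abs_nonneg _) ?_
          positivity
      _ = M * ((m * x) ^ k / (k.factorial : ℝ)) := by ring
  have key := tendsto_tsum_of_dominated_convergence hsum hpt hbd
  refine key.congr fun n => ?_
  rw [Finset.mul_sum]
  refine tsum_eq_sum fun k hk => ?_
  simp only [Finset.mem_range, not_lt] at hk
  simp [hF, Nat.choose_eq_zero_of_lt (show m * n < k by omega)]
end

section
/- Let m ∈ ℕ with m ≥ 1 and x ≥ 0. Then for every bounded continuous f : [0,∞) → ℝ, lim_{n→∞} (1 − x/n)^{mn+1} Σ_{k=0}^{∞} C(mn+k,k) (x/n)^k f(k/m) = Σ_{k=0}^{∞} e^{−mx}(mx)^k/k! · f(k/m) (the left-hand side being defined for all n > x); that is, lim_{n→∞} M_{mn}( f(nt/(1−t)); x/n ) = B_m^{[0]}( f(t); x ). -/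
open Filter Topology

/-- Key product identity for the MKZ coefficients. -/
lemma mkz_key (a : ℕ) (x : ℝ) {n : ℕ} (hn : (n : ℝ) ≠ 0) :
    ∀ k : ℕ, ((a + k).choose k : ℝ) * (x / n) ^ k
      = ∏ i ∈ Finset.range k, ((a : ℝ) * x / ((i + 1) * n) + x / n)
  | 0 => by simp
  | (k + 1) => by
    have h2 : ((a + k + 1) * (a + k).choose k : ℕ) = ((a + k + 1).choose (k + 1) * (k + 1) : ℕ) := by
      simpa [Nat.succ_eq_add_one] using Nat.add_one_mul_choose_eq (a + k) k
    have h1 : ((a + k + 1).choose (k + 1) : ℝ) * ((k : ℝ) + 1)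
        = ((a : ℝ) + k + 1) * ((a + k).choose k) := by
      exact_mod_cast h2.symm
    have hk : ((k : ℝ) + 1) ≠ 0 := by positivity
    rw [Finset.prod_range_succ, ← mkz_key a x hn k, pow_succ]
    have h3 : ((a + (k + 1)).choose (k + 1) : ℝ)
        = ((a : ℝ) + k + 1) * ((a + k).choose k) / ((k : ℝ) + 1) := by
      rw [eq_div_iff hk, show a + (k + 1) = a + k + 1 from by omega]
      exact h1
    rw [h3]
    field_simp
    ring

lemma mkz_key2 (m n k : ℕ) (x : ℝ) (hn : (n : ℝ) ≠ 0) :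
    ((m * n + k).choose k : ℝ) * (x / n) ^ k
      = ∏ i ∈ Finset.range k, ((m : ℝ) * x / (i + 1) + x / n) := by
  rw [mkz_key (m * n) x hn k]
  refine Finset.prod_congr rfl fun i _ => ?_
  have hi : ((i : ℝ) + 1) ≠ 0 := by positivity
  push_cast
  field_simp

lemma mkz_prod_val (m k : ℕ) (x : ℝ) :
    ∏ i ∈ Finset.range k, ((m : ℝ) * x / (i + 1)) = (m * x) ^ k / k.factorial := by
  induction k with
  | zero => simp
  | succ k ih =>
    rw [Finset.prod_range_succ, ih, div_mul_div_comm, pow_succ]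
    congr 1
    push_cast [Nat.factorial_succ]
    ring

/-- **Convergence of rescaled Meyer–König and Zeller operators to the Szász–Mirakjan
operator:** for `m ≥ 1`, `x ≥ 0` and bounded continuous `f : [0,∞) → ℝ`,
`lim_{n→∞} M_{mn}(f(nt/(1-t)); x/n) = B_m^{[0]}(f(t); x)`. -/
theorem stmt_9 (m : ℕ) (hm : 1 ≤ m) (x : ℝ) (hx : 0 ≤ x)
    (f : ℝ → ℝ) (hf : ContinuousOn f (Set.Ici 0))
    (hfb : ∃ M : ℝ, ∀ t ∈ Set.Ici (0 : ℝ), |f t| ≤ M) :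
    Tendsto (fun n : ℕ =>
        (1 - x / n) ^ (m * n + 1) *
          ∑' k : ℕ, ((m * n + k).choose k : ℝ) * (x / n) ^ k * f (k / m))
      atTop
      (𝓝 (∑' k : ℕ, Real.exp (-(m * x)) * (m * x) ^ k / (k.factorial : ℝ) * f (k / m))) := by
  obtain ⟨M, hM⟩ := hfb
  have hM0 : 0 ≤ M := (abs_nonneg _).trans (hM 0 (Set.mem_Ici.mpr le_rfl))
  set p : ℕ → ℝ := fun k => ∏ i ∈ Finset.range k, ((m : ℝ) * x / (i + 1) + 1 / 2) with hp
  have hmx : 0 ≤ (m : ℝ) * x := by positivity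
  have hp_pos : ∀ k, 0 < p k := fun k => Finset.prod_pos fun i _ => by positivity
  have hp_sum : Summable fun k => p k * M := by
    apply Summable.mul_right
    apply summable_of_ratio_norm_eventually_le (r := 3 / 4) (by norm_num)
    filter_upwards [eventually_ge_atTop ⌈4 * (m : ℝ) * x⌉₊] with k hk
    have hk1 : 4 * (m : ℝ) * x ≤ k + 1 := by
      calc 4 * (m : ℝ) * x ≤ (⌈4 * (m : ℝ) * x⌉₊ : ℝ) := Nat.le_ceil _
        _ ≤ (k : ℝ) := by exact_mod_cast hk
        _ ≤ k + 1 := by linarith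
    have hrec : p (k + 1) = p k * ((m : ℝ) * x / (k + 1) + 1 / 2) := Finset.prod_range_succ _ k
    rw [Real.norm_of_nonneg (hp_pos _).le, Real.norm_of_nonneg (hp_pos _).le, hrec,
      mul_comm (3 / 4 : ℝ)]
    apply mul_le_mul_of_nonneg_left ?_ (hp_pos k).le
    have hdiv : (m : ℝ) * x / (k + 1) ≤ 1 / 4 := by
      rw [div_le_iff₀ (by positivity)]
      linarith
    linarith
  -- limit of the prefactor
  have hA : Tendsto (fun n : ℕ => (1 - x / n) ^ (m * n + 1)) atTop
      (𝓝 (Real.exp (-(m * x)))) := by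
    have h1 := (Real.tendsto_one_add_div_pow_exp (-x)).pow m
    have h2 : Tendsto (fun n : ℕ => 1 + -x / n) atTop (𝓝 1) := by
      simpa using tendsto_const_nhds.add (tendsto_const_div_atTop_nhds_zero_nat (-x))
    have h3 := h1.mul h2
    rw [mul_one] at h3
    have hE : Real.exp (-x) ^ m = Real.exp (-(m * x)) := by
      rw [← Real.exp_nat_mul]; ring_nf
    rw [hE] at h3
    refine h3.congr fun n => ?_
    rw [← pow_mul, ← pow_succ, Nat.mul_comm n m]
    congr 1
    ring
  -- pointwise limit of coefficients
  have hB : ∀ k : ℕ, Tendsto (fun n : ℕ => ((m * n + k).choose k : ℝ) * (x / n) ^ k)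
      atTop (𝓝 ((m * x) ^ k / k.factorial)) := by
    intro k
    have hlim : Tendsto (fun n : ℕ => ∏ i ∈ Finset.range k, ((m : ℝ) * x / (i + 1) + x / n))
        atTop (𝓝 (∏ i ∈ Finset.range k, ((m : ℝ) * x / (i + 1)))) := by
      apply tendsto_finset_prod
      intro i _
      simpa using tendsto_const_nhds.add (tendsto_const_div_atTop_nhds_zero_nat x)
    rw [mkz_prod_val m k x] at hlim
    apply hlim.congr'
    filter_upwards [eventually_ge_atTop 1] with n hn
    have hn' : (n : ℝ) ≠ 0 := Nat.cast_ne_zero.mpr (by omega)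
    exact (mkz_key2 m n k x hn').symm
  -- full pointwise limit
  have hlim : ∀ k : ℕ, Tendsto (fun n : ℕ =>
      (1 - x / n) ^ (m * n + 1) *
        (((m * n + k).choose k : ℝ) * (x / n) ^ k * f (k / m))) atTop
      (𝓝 (Real.exp (-(m * x)) * (m * x) ^ k / (k.factorial : ℝ) * f (k / m))) := by
    intro k
    have h := hA.mul ((hB k).mul_const (f (k / m)))
    convert h using 2
    ring
  -- the bound
  have hbound : ∀ᶠ n : ℕ in atTop, ∀ k : ℕ,
      ‖(1 - x / n) ^ (m * n + 1) *
        (((m * n + k).choose k : ℝ) * (x / n) ^ k * f (k / m))‖ ≤ p k * M := by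
    filter_upwards [eventually_ge_atTop 1,
      tendsto_natCast_atTop_atTop.eventually_ge_atTop (2 * x)] with n hn1 hn2
    intro k
    have hn0 : (0 : ℝ) < n := by exact_mod_cast Nat.lt_of_lt_of_le Nat.zero_lt_one hn1
    have hn' : (n : ℝ) ≠ 0 := ne_of_gt hn0
    have hxn : x / n ≤ 1 / 2 := by rw [div_le_iff₀ hn0]; linarith
    have hxn0 : 0 ≤ x / n := by positivity
    have hB0 : 0 ≤ ((m * n + k).choose k : ℝ) * (x / n) ^ k := by positivity
    have hBle : ((m * n + k).choose k : ℝ) * (x / n) ^ k ≤ p k := by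
      rw [mkz_key2 m n k x hn']
      apply Finset.prod_le_prod
      · intro i _; positivity
      · intro i _
        have : (0:ℝ) ≤ (m : ℝ) * x / (i + 1) := by positivity
        linarith
    have hA1 : ‖(1 - x / n) ^ (m * n + 1)‖ ≤ 1 := by
      rw [Real.norm_eq_abs, abs_pow]
      apply pow_le_one₀ (abs_nonneg _)
      rw [abs_le]
      constructor <;> linarith
    have hc : ‖f ((k : ℝ) / m)‖ ≤ M := by
      rw [Real.norm_eq_abs]
      exact hM _ (Set.mem_Ici.mpr (by positivity))
    calc ‖(1 - x / n) ^ (m * n + 1) *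
          (((m * n + k).choose k : ℝ) * (x / n) ^ k * f (k / m))‖
        = ‖(1 - x / n) ^ (m * n + 1)‖ *
          (‖((m * n + k).choose k : ℝ) * (x / n) ^ k‖ * ‖f ((k : ℝ) / m)‖) := by
          rw [norm_mul, norm_mul]
      _ ≤ 1 * (p k * M) := by
          apply mul_le_mul hA1 _ (mul_nonneg (norm_nonneg _) (norm_nonneg _)) one_pos.le
          apply mul_le_mul _ hc (norm_nonneg _) (hp_pos k).le
          rwa [Real.norm_of_nonneg hB0]
      _ = p k * M := one_mul _
  have h := tendsto_tsum_of_dominated_convergence hp_sum hlim hbound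
  simpa only [tsum_mul_left] using h
end

section
/- Let m ∈ ℕ with m ≥ 1 and x ≥ 0. Then for every bounded continuous f : [0,∞) → ℝ, lim_{n→∞} (1 − x/n)^{mn+1} Σ_{k=0}^{∞} C(mn+k,k) (x/n)^k f( (mn+1)k/(m²n) ) = Σ_{k=0}^{∞} e^{−mx}(mx)^k/k! · f(k/m); that is, lim_{n→∞} M_{mn}( f((mn+1)t/(m(1−t))); x/n ) = B_m^{[0]}( f(t); x ). -/
open Filter Topology Finset

lemma aux_cast_choose_prod (r k : ℕ) :
    ((r + k).choose k : ℝ) * (k.factorial : ℝ) = ∏ i ∈ Finset.range k, ((r : ℝ) + 1 + i) := by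
  induction k with
  | zero => simp
  | succ k ih =>
    have h := Nat.add_one_mul_choose_eq (r + k) k
    have hc : ((r + k + 1 : ℕ) : ℝ) * ((r + k).choose k : ℝ)
        = ((r + k + 1).choose (k + 1) : ℝ) * ((k + 1 : ℕ) : ℝ) := by
      exact_mod_cast congrArg (Nat.cast (R := ℝ)) h
    rw [Finset.prod_range_succ, ← ih, show r + (k + 1) = r + k + 1 by omega,
      Nat.factorial_succ]
    push_cast at hc ⊢
    linear_combination (-(k.factorial : ℝ)) * hc

lemma aux_tendsto_choose (m k : ℕ) (x : ℝ) :
    Tendsto (fun n : ℕ => ((m * n + k).choose k : ℝ) * (x / n) ^ k) atTop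
      (𝓝 ((m * x) ^ k / (k.factorial : ℝ))) := by
  have hfac : (0:ℝ) < (k.factorial : ℝ) := by exact_mod_cast k.factorial_pos
  have hlim : Tendsto (fun n : ℕ => (∏ i ∈ Finset.range k, ((m:ℝ) + (1 + i) / n)) * (x ^ k / (k.factorial : ℝ)))
      atTop (𝓝 ((∏ i ∈ Finset.range k, (m:ℝ)) * (x ^ k / (k.factorial : ℝ)))) := by
    apply Tendsto.mul_const
    apply tendsto_finset_prod
    intro i _
    have : Tendsto (fun n : ℕ => (1 + (i:ℝ)) / n) atTop (𝓝 0) :=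
      tendsto_const_div_atTop_nhds_zero_nat _
    simpa using tendsto_const_nhds.add this
  have heq : (∏ i ∈ Finset.range k, (m:ℝ)) * (x ^ k / (k.factorial : ℝ))
      = (m * x) ^ k / (k.factorial : ℝ) := by
    rw [Finset.prod_const, Finset.card_range, mul_pow]; ring
  rw [heq] at hlim
  apply hlim.congr'
  filter_upwards [eventually_ge_atTop 1] with n hn
  have hn0 : ((n:ℝ)) ≠ 0 := by positivity
  have key := aux_cast_choose_prod (m * n) k
  have hch : ((m * n + k).choose k : ℝ) = (∏ i ∈ Finset.range k, ((m:ℝ) * n + 1 + i)) / (k.factorial : ℝ) := by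
    push_cast at key
    rw [eq_div_iff hfac.ne']; exact key
  have hprod : ∏ i ∈ Finset.range k, ((m:ℝ) + (1 + i) / n)
      = (∏ i ∈ Finset.range k, ((m:ℝ) * n + 1 + i)) / (n:ℝ) ^ k := by
    rw [show ((n:ℝ)) ^ k = ∏ _i ∈ Finset.range k, (n:ℝ) by
        rw [Finset.prod_const, Finset.card_range], ← Finset.prod_div_distrib]
    exact Finset.prod_congr rfl fun i _ => by field_simp; ring
  rw [hprod, hch, div_pow]
  ring

lemma aux_tendsto_exp (m : ℕ) (x : ℝ) :
    Tendsto (fun n : ℕ => (1 - x / n) ^ (m * n + 1)) atTop (𝓝 (Real.exp (-(m * x)))) := by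
  have h1 : Tendsto (fun n : ℕ => (1 + (-x) / n) ^ n) atTop (𝓝 (Real.exp (-x))) :=
    Real.tendsto_one_add_div_pow_exp (-x)
  have h2 : Tendsto (fun n : ℕ => ((1 + (-x) / n) ^ n) ^ m) atTop (𝓝 (Real.exp (-x) ^ m)) :=
    h1.pow m
  have h3 : Tendsto (fun n : ℕ => 1 + (-x) / n) atTop (𝓝 1) := by
    simpa using tendsto_const_nhds.add (tendsto_const_div_atTop_nhds_zero_nat (-x))
  have h4 := h2.mul h3
  rw [mul_one] at h4
  have heq : Real.exp (-x) ^ m = Real.exp (-(m * x)) := by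
    rw [← Real.exp_nat_mul]; ring_nf
  rw [heq] at h4
  apply h4.congr
  intro n
  rw [neg_div, ← sub_eq_add_neg, ← pow_mul, ← pow_succ]
  ring_nf

lemma aux_tendsto_arg (m k : ℕ) (hm : 1 ≤ m) :
    Tendsto (fun n : ℕ => ((m * n : ℕ) + 1 : ℝ) * k / ((m:ℝ) ^ 2 * n)) atTop
      (𝓝 ((k : ℝ) / m)) := by
  have hm0 : (0:ℝ) < m := by exact_mod_cast hm
  have h : Tendsto (fun n : ℕ => (k:ℝ) / m + ((k:ℝ) / m ^ 2) * (1 / n)) atTop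
      (𝓝 ((k:ℝ) / m + ((k:ℝ) / m ^ 2) * 0)) :=
    tendsto_const_nhds.add (tendsto_const_nhds.mul tendsto_one_div_atTop_nhds_zero_nat)
  rw [mul_zero, add_zero] at h
  apply h.congr'
  filter_upwards [eventually_ge_atTop 1] with n hn
  have hn0 : ((n:ℝ)) ≠ 0 := by positivity
  push_cast
  field_simp


/-- **Convergence of rescaled Meyer–König and Zeller operators (second modification) to the
Szász–Mirakjan operator:** for `m ≥ 1`, `x ≥ 0` and bounded continuous `f : [0,∞) → ℝ`,
`lim_{n→∞} M_{mn}(f((mn+1)t/(m(1-t))); x/n) = B_m^{[0]}(f(t); x)`. -/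
theorem stmt_10 (m : ℕ) (hm : 1 ≤ m) (x : ℝ) (hx : 0 ≤ x)
    (f : ℝ → ℝ) (hf : ContinuousOn f (Set.Ici 0))
    (hfb : ∃ M : ℝ, ∀ t ∈ Set.Ici (0 : ℝ), |f t| ≤ M) :
    Tendsto (fun n : ℕ =>
        (1 - x / n) ^ (m * n + 1) *
          ∑' k : ℕ, ((m * n + k).choose k : ℝ) * (x / n) ^ k *
            f (((m * n : ℕ) + 1 : ℝ) * k / (m ^ 2 * n)))
      atTop
      (𝓝 (∑' k : ℕ, Real.exp (-(m * x)) * (m * x) ^ k / (k.factorial : ℝ) * f (k / m))) := by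
  obtain ⟨M, hM⟩ := hfb
  have hm0 : (0:ℝ) < m := by exact_mod_cast hm
  have hM0 : (0:ℝ) ≤ M := (abs_nonneg _).trans (hM 0 (Set.mem_Ici.mpr le_rfl))
  set K₀ : ℕ := ⌈4 * (m:ℝ) * x⌉₊ with hK₀def
  have hK₀x : 4 * (m:ℝ) * x ≤ K₀ := Nat.le_ceil _
  simp only [← tsum_mul_left]
  refine tendsto_tsum_of_dominated_convergence
    (f := fun (n : ℕ) (k : ℕ) => (1 - x / n) ^ (m * n + 1) *
      (((m * n + k).choose k : ℝ) * (x / n) ^ k *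
        f (((m * n : ℕ) + 1 : ℝ) * k / ((m:ℝ) ^ 2 * n))))
    (g := fun k : ℕ => Real.exp (-(m * x)) * (m * x) ^ k / (k.factorial : ℝ) * f (k / m))
    (bound := fun k : ℕ => (M * (4/3:ℝ) ^ K₀) * (3/4:ℝ) ^ k)
    ((summable_geometric_of_lt_one (by norm_num) (by norm_num)).mul_left _) ?_ ?_
  · -- pointwise convergence
    intro k
    have hA := aux_tendsto_exp m x
    have hB := aux_tendsto_choose m k x
    have hC' := aux_tendsto_arg m k hm
    have hkm : (k:ℝ)/m ∈ Set.Ici (0:ℝ) := Set.mem_Ici.mpr (by positivity)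
    have hC : Tendsto (fun n : ℕ => f (((m * n : ℕ) + 1 : ℝ) * k / ((m:ℝ)^2 * n))) atTop
        (𝓝 (f ((k:ℝ)/m))) := by
      refine (hf _ hkm).tendsto.comp (tendsto_nhdsWithin_iff.mpr ⟨hC', ?_⟩)
      exact Eventually.of_forall fun n => Set.mem_Ici.mpr (by positivity)
    have h := hA.mul (hB.mul hC)
    rw [show Real.exp (-(↑m * x)) * ((↑m * x) ^ k / ↑k.factorial * f (↑k / ↑m))
        = Real.exp (-(↑m * x)) * (↑m * x) ^ k / ↑k.factorial * f (↑k / ↑m) by ring] at h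
    exact h.congr fun n => by ring
  · -- uniform bound
    have hxev : ∀ᶠ n : ℕ in atTop, 2 * x ≤ (n:ℝ) :=
      tendsto_natCast_atTop_atTop.eventually_ge_atTop (2 * x)
    filter_upwards [hxev, eventually_ge_atTop 1] with n hn2x hn1
    have hn0 : (0:ℝ) < n := by exact_mod_cast hn1
    set q := x / (n:ℝ) with hqdef
    have hq0 : 0 ≤ q := div_nonneg hx hn0.le
    have hqh : q ≤ 1/2 := by rw [hqdef, div_le_iff₀ hn0]; linarith
    have h1q : (0:ℝ) < 1 - q := by linarith
    set p : ℕ → ℝ := fun k => (1 - q) ^ (m*n+1) * (((m*n+k).choose k : ℝ) * q ^ k) with hpdef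
    have hp0 : ∀ k, 0 ≤ p k := fun k => by
      apply mul_nonneg (by positivity) (mul_nonneg (by positivity) (by positivity))
    have hp1 : ∀ k, p k ≤ 1 := by
      intro k
      have hnorm : ‖q‖ < 1 := by rw [Real.norm_eq_abs, abs_of_nonneg hq0]; linarith
      have hs := hasSum_choose_mul_geometric_of_norm_lt_one (𝕜 := ℝ) (m*n) hnorm
      have ht := le_hasSum hs k (fun j _ => by positivity)
      have hcc : ((m*n+k).choose k) = ((k + m*n).choose (m*n)) := by
        rw [Nat.add_comm, Nat.choose_symm_add]
      calc p k ≤ (1-q)^(m*n+1) * (1/(1-q)^(m*n+1)) := by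
            refine mul_le_mul_of_nonneg_left ?_ (by positivity)
            rw [hcc]; exact ht
        _ = 1 := by field_simp
    have hpr : ∀ k, K₀ ≤ k → p (k+1) ≤ 3/4 * p k := by
      intro k hk
      have hcast : ((m*n+k+1).choose (k+1) : ℝ) * ((k:ℝ)+1)
          = ((m:ℝ)*n + k + 1) * ((m*n+k).choose k : ℝ) := by
        have h := congrArg (Nat.cast (R := ℝ)) (Nat.add_one_mul_choose_eq (m*n+k) k)
        push_cast at h
        linarith [h]
      have hk4 : 4 * (m:ℝ) * x ≤ (k:ℝ) + 1 := by
        refine hK₀x.trans ?_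
        have : (K₀:ℝ) ≤ (k:ℝ) := by exact_mod_cast hk
        linarith
      have hkey : ((m:ℝ)*n + k + 1) * q ≤ 3/4 * ((k:ℝ)+1) := by
        have e1 : ((m:ℝ)*n) * q = m * x := by rw [hqdef]; field_simp
        have e2 : ((k:ℝ)+1) * q ≤ ((k:ℝ)+1) * (1/2) :=
          mul_le_mul_of_nonneg_left hqh (by positivity)
        nlinarith [e1, e2, hk4]
      have hiden : p (k+1) * ((k:ℝ)+1) = p k * (((m:ℝ)*n + k + 1) * q) := by
        simp only [hpdef]
        rw [show m*n+(k+1) = m*n+k+1 from rfl, pow_succ]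
        linear_combination ((1-q)^(m*n+1) * q^k * q) * hcast
      have hstep : p k * (((m:ℝ)*n + k + 1) * q) ≤ (3/4 * p k) * ((k:ℝ)+1) := by
        calc p k * (((m:ℝ)*n + k + 1) * q) ≤ p k * (3/4 * ((k:ℝ)+1)) :=
              mul_le_mul_of_nonneg_left hkey (hp0 k)
          _ = (3/4 * p k) * ((k:ℝ)+1) := by ring
      have hk1 : (0:ℝ) < (k:ℝ) + 1 := by positivity
      have := hiden.le.trans hstep
      exact le_of_mul_le_mul_right this hk1
    have hpg : ∀ j, p (K₀ + j) ≤ (3/4:ℝ)^j := by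
      intro j
      induction j with
      | zero => simpa using hp1 K₀
      | succ j ih =>
        calc p (K₀ + (j+1)) = p ((K₀ + j) + 1) := by rw [show K₀+(j+1) = (K₀+j)+1 from rfl]
          _ ≤ 3/4 * p (K₀ + j) := hpr _ (Nat.le_add_right _ _)
          _ ≤ 3/4 * (3/4:ℝ)^j := by linarith [ih]
          _ = (3/4:ℝ)^(j+1) := by ring
    have hpb : ∀ k, p k ≤ (4/3:ℝ)^K₀ * (3/4:ℝ)^k := by
      intro k
      rcases le_or_gt K₀ k with h | h
      · obtain ⟨j, rfl⟩ := Nat.exists_eq_add_of_le h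
        calc p (K₀+j) ≤ (3/4:ℝ)^j := hpg j
          _ = (4/3:ℝ)^K₀ * (3/4:ℝ)^(K₀+j) := by
              rw [pow_add, ← mul_assoc, ← mul_pow]; norm_num
      · calc p k ≤ 1 := hp1 k
          _ = (4/3:ℝ)^k * (3/4:ℝ)^k := by rw [← mul_pow]; norm_num
          _ ≤ (4/3:ℝ)^K₀ * (3/4:ℝ)^k := by
              refine mul_le_mul_of_nonneg_right ?_ (by positivity)
              exact pow_le_pow_right₀ (by norm_num) h.le
    intro k
    have hfarg : |f (((m * n : ℕ) + 1 : ℝ) * k / ((m:ℝ)^2 * n))| ≤ M :=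
      hM _ (Set.mem_Ici.mpr (by positivity))
    have habs : ‖(1 - q) ^ (m * n + 1) *
        (((m * n + k).choose k : ℝ) * q ^ k *
          f (((m * n : ℕ) + 1 : ℝ) * k / ((m:ℝ) ^ 2 * n)))‖
        = p k * |f (((m * n : ℕ) + 1 : ℝ) * k / ((m:ℝ)^2 * n))| := by
      rw [Real.norm_eq_abs, abs_mul, abs_mul,
        abs_of_nonneg (a := (1-q)^(m*n+1)) (by positivity),
        abs_of_nonneg (a := ((m*n+k).choose k : ℝ) * q ^ k) (by positivity)]
      simp only [hpdef]; ring
    rw [habs]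
    calc p k * |f (((m * n : ℕ) + 1 : ℝ) * k / ((m:ℝ)^2 * n))| ≤ p k * M :=
          mul_le_mul_of_nonneg_left hfarg (hp0 k)
      _ ≤ ((4/3:ℝ)^K₀ * (3/4:ℝ)^k) * M :=
          mul_le_mul_of_nonneg_right (hpb k) hM0
      _ = M * (4/3:ℝ)^K₀ * (3/4:ℝ)^k := by ring
end

section
/- Let m ∈ ℕ with m ≥ 1 and x > 0. Then for every bounded continuous f : [0,∞) → ℝ, lim_{n→∞} (1 + nx)^{−(m+1)} Σ_{k=0}^{∞} C(m+k,k) ( nx/(1+nx) )^k f( k/(mn) ) = G_{m+1}( f(t); ((m+1)/m)·x ); that is, lim_{n→∞} M_m( f( t/(n(1−t)) ); nx/(1+nx) ) = G_{m+1}( f(t); ((m+1)/m)·x ). -/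
open Filter Topology MeasureTheory Set Asymptotics

lemma floor_piece {c : ℝ} (hc : 0 < c) (k : ℕ) {t : ℝ}
    (ht : t ∈ Set.Ico ((k:ℝ)/c) ((k+1:ℝ)/c)) : ⌊c*t⌋₊ = k := by
  obtain ⟨h1, h2⟩ := ht
  have hk : (k:ℝ) ≤ c * t := by rw [div_le_iff₀ hc] at h1; linarith [h1]
  have hk2 : c * t < k + 1 := by rw [lt_div_iff₀ hc] at h2; linarith [h2]
  have h0 : (0:ℝ) ≤ c * t := le_trans (by positivity) hk
  rw [Nat.floor_eq_iff h0]
  exact ⟨by exact_mod_cast hk, by exact_mod_cast hk2⟩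

lemma ici_eq_union {c : ℝ} (hc : 0 < c) :
    Set.Ici (0:ℝ) = ⋃ k : ℕ, Set.Ico ((k:ℝ)/c) ((k+1:ℝ)/c) := by
  ext t
  simp only [Set.mem_Ici, Set.mem_iUnion, Set.mem_Ico]
  constructor
  · intro ht
    refine ⟨⌊c*t⌋₊, ?_, ?_⟩
    · rw [div_le_iff₀ hc]
      calc (⌊c*t⌋₊ : ℝ) ≤ c*t := Nat.floor_le (by positivity)
        _ = t * c := mul_comm _ _
    · rw [lt_div_iff₀ hc]
      calc t * c = c * t := mul_comm _ _
        _ < ⌊c*t⌋₊ + 1 := Nat.lt_floor_add_one _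
  · rintro ⟨k, h1, h2⟩
    have : (0:ℝ) ≤ (k:ℝ)/c := by positivity
    linarith

lemma sum_eq_int {c : ℝ} (hc : 0 < c) (g : ℕ → ℝ)
    (h_int : MeasureTheory.IntegrableOn (fun t => g ⌊c*t⌋₊) (Set.Ici 0)) :
    ∑' k, g k = c * ∫ t in Set.Ioi (0:ℝ), g ⌊c*t⌋₊ := by
  have hd : Pairwise (Function.onFun Disjoint
      (fun k : ℕ => Set.Ico ((k:ℝ)/c) ((k+1:ℝ)/c))) := by
    intro i j hij
    rw [Function.onFun, Set.disjoint_left]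
    intro t hti htj
    exact hij ((floor_piece hc i hti).symm.trans (floor_piece hc j htj))
  have h1 := MeasureTheory.integral_iUnion (μ := volume)
      (f := fun t => g ⌊c*t⌋₊)
      (fun k : ℕ => measurableSet_Ico) hd ((ici_eq_union hc) ▸ h_int)
  have h2 : ∀ k : ℕ, (∫ t in Set.Ico ((k:ℝ)/c) ((k+1:ℝ)/c), g ⌊c*t⌋₊) = (1/c) * g k := by
    intro k
    rw [MeasureTheory.setIntegral_congr_fun measurableSet_Ico
        (fun t ht => by rw [floor_piece hc k ht])]
    rw [MeasureTheory.setIntegral_const, Real.volume_real_Ico, smul_eq_mul]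
    congr 1
    rw [max_eq_left (by rw [sub_nonneg]; gcongr <;> simp)]
    field_simp
    ring
  rw [← ici_eq_union hc] at h1
  rw [← MeasureTheory.integral_Ici_eq_integral_Ioi, h1,
    tsum_congr h2, tsum_mul_left]
  have : c ≠ 0 := hc.ne'
  field_simp

lemma intB (m : ℕ) {b : ℝ} (hb : 0 < b) :
    MeasureTheory.IntegrableOn (fun t => (1+t)^m * Real.exp (-b*t)) (Set.Ici (0:ℝ)) := by
  have hb2 : 0 < b/2 := half_pos hb
  have h2 : Tendsto (fun t : ℝ => (1+t)^m * Real.exp (-(b/2)*t)) atTop (𝓝 0) := by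
    have base := Real.tendsto_pow_mul_exp_neg_atTop_nhds_zero m
    have hcomp : Tendsto (fun t : ℝ => (b/2)*(1+t)) atTop atTop := by
      apply Tendsto.const_mul_atTop hb2
      exact tendsto_atTop_add_const_left _ _ tendsto_id
    have := (base.comp hcomp).const_mul ((2/b)^m * Real.exp (b/2))
    rw [mul_zero] at this
    refine this.congr (fun t => ?_)
    simp only [Function.comp_apply]
    have hbne : b ≠ 0 := hb.ne'
    have he : Real.exp (b/2) * Real.exp (-(b / 2 * (1 + t))) = Real.exp (-(b/2)*t) := by
      rw [← Real.exp_add]; ring_nf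
    rw [show (2 / b) ^ m * Real.exp (b / 2) *
        ((b / 2 * (1 + t)) ^ m * Real.exp (-(b / 2 * (1 + t)))) =
        ((2/b) * (b/2*(1+t)))^m * (Real.exp (b/2) * Real.exp (-(b/2*(1+t)))) from by
      rw [mul_pow (2/b) (b/2*(1+t)) m]; ring, he,
      show (2/b) * (b/2*(1+t)) = 1+t from by
      rw [← mul_assoc, show (2/b)*(b/2) = 1 from by field_simp, one_mul]]
  have hO : (fun t : ℝ => (1+t)^m * Real.exp (-b*t)) =O[atTop]
      fun t => Real.exp (-(b/2)*t) := by
    apply Asymptotics.IsBigO.of_bound 1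
    filter_upwards [h2.eventually_le_const (by norm_num : (0:ℝ) < 1),
      eventually_ge_atTop (0:ℝ)] with t h1 h0
    have hpos : (0:ℝ) ≤ (1+t)^m := by positivity
    rw [Real.norm_eq_abs, Real.norm_eq_abs, abs_of_nonneg (by positivity),
      abs_of_nonneg (Real.exp_pos _).le, one_mul]
    have : Real.exp (-b*t) = Real.exp (-(b/2)*t) * Real.exp (-(b/2)*t) := by
      rw [← Real.exp_add]; ring_nf
    rw [this, ← mul_assoc]
    calc (1+t)^m * Real.exp (-(b/2)*t) * Real.exp (-(b/2)*t)
        ≤ 1 * Real.exp (-(b/2)*t) := by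
          apply mul_le_mul_of_nonneg_right h1 (Real.exp_pos _).le
      _ = Real.exp (-(b/2)*t) := one_mul _
  have hcont : ContinuousOn (fun t : ℝ => (1+t)^m * Real.exp (-b*t)) (Set.Ici 0) :=
    (Continuous.mul (by continuity) (by continuity)).continuousOn
  have := integrable_of_isBigO_exp_neg hb2 hcont hO
  rwa [IntegrableOn, Measure.restrict_congr_set Ioi_ae_eq_Ici] at this
set_option maxHeartbeats 1000000 in
/-- **Convergence of modified Meyer–König and Zeller operators to the Gamma operator:**
for `m ≥ 1`, `x > 0` and bounded continuous `f : [0,∞) → ℝ`,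
`lim_{n→∞} M_m(f(t/(n(1-t))); nx/(1+nx)) = G_{m+1}(f(t); ((m+1)/m)x)`, where
`G_{m+1}(f; y) = (y^{-(m+1)}/m!) ∫_0^∞ f(t/(m+1)) t^m e^{-t/y} dt`. -/
theorem stmt_11 (m : ℕ) (hm : 1 ≤ m) (x : ℝ) (hx : 0 < x)
    (f : ℝ → ℝ) (hf : ContinuousOn f (Set.Ici 0))
    (hfb : ∃ M : ℝ, ∀ t ∈ Set.Ici (0 : ℝ), |f t| ≤ M) :
    Tendsto (fun n : ℕ =>
        (1 / (1 + n * x) ^ (m + 1)) *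
          ∑' k : ℕ, ((m + k).choose k : ℝ) * (n * x / (1 + n * x)) ^ k * f (k / (m * n)))
      atTop
      (𝓝 ((((m : ℝ) + 1) / m * x) ^ (-((m : ℤ) + 1)) / (m.factorial : ℝ) *
        ∫ t in Set.Ioi (0 : ℝ),
          f (t / (m + 1)) * t ^ m * Real.exp (-t / (((m : ℝ) + 1) / m * x)))) := by
  obtain ⟨M, hM⟩ := hfb
  set M' : ℝ := max M 0 with hM'def
  have hM' : ∀ t ∈ Set.Ici (0:ℝ), |f t| ≤ M' := fun t ht => (hM t ht).trans (le_max_left _ _)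
  have hM'0 : 0 ≤ M' := le_max_right _ _
  have hm0 : (0:ℝ) < m := by exact_mod_cast hm
  have hb : (0:ℝ) < (m:ℝ)/(2*x) := by positivity
  set b : ℝ := (m:ℝ)/(2*x) with hbdef
  set K : ℝ := M' * ((1+x)/x) * ((m:ℝ)^(m+1)/x^(m+1)) with hKdef
  set B : ℝ → ℝ := fun t => K * ((1+t)^m * Real.exp (-b*t)) with hBdef
  have hBint : MeasureTheory.IntegrableOn B (Set.Ici (0:ℝ)) := (intB m hb).const_mul K
  set g : ℕ → ℕ → ℝ := fun n k =>
    ((m + k).choose k : ℝ) * ((n:ℝ) * x / (1 + n * x)) ^ k * f (k / (m * n)) with hgdef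
  set Φ : ℕ → ℝ → ℝ := fun n t =>
    ((m:ℝ) * n / (1 + n * x) ^ (m+1)) * g n ⌊(m:ℝ)*n*t⌋₊ with hΦdef
  set n₀ : ℕ := max 1 ⌈1/x⌉₊ with hn₀def
  have hn₀ : ∀ n : ℕ, n₀ ≤ n → (1:ℝ) ≤ n ∧ 1 ≤ (n:ℝ)*x := by
    intro n hn
    have h1 : (1:ℕ) ≤ n := le_trans (le_max_left _ _) hn
    have h2 : (⌈1/x⌉₊ : ℕ) ≤ n := le_trans (le_max_right _ _) hn
    constructor
    · exact_mod_cast h1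
    · have : (1:ℝ)/x ≤ n := le_trans (Nat.le_ceil _) (by exact_mod_cast h2)
      rw [div_le_iff₀ hx] at this
      linarith
  -- the uniform bound
  have hbound : ∀ n : ℕ, n₀ ≤ n → ∀ t : ℝ, 0 ≤ t → |Φ n t| ≤ B t := by
    intro n hn t ht
    obtain ⟨hn1, hnx⟩ := hn₀ n hn
    have hnpos : (0:ℝ) < n := lt_of_lt_of_le one_pos hn1
    have h1nx : (0:ℝ) < 1 + n*x := by nlinarith
    have hcpos : (0:ℝ) < (m:ℝ)*n := by positivity
    obtain ⟨k, hkdef⟩ : ∃ k : ℕ, k = ⌊(m:ℝ)*n*t⌋₊ := ⟨_, rfl⟩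
    obtain ⟨q, hqdef⟩ : ∃ q : ℝ, q = (n:ℝ)*x/(1+n*x) := ⟨_, rfl⟩
    have hq0 : 0 < q := hqdef ▸ div_pos (by nlinarith) h1nx
    have hq1 : q < 1 := hqdef ▸ (div_lt_one h1nx).mpr (by linarith)
    have hpref : (0:ℝ) < (m:ℝ) * n / (1 + n * x) ^ (m+1) := by positivity
    have hk_le : (k:ℝ) ≤ (m:ℝ)*n*t := hkdef ▸ Nat.floor_le (by positivity)
    have hk_ge : (m:ℝ)*n*t - 1 ≤ (k:ℝ) := by
      rw [hkdef]
      have := Nat.lt_floor_add_one ((m:ℝ)*n*t)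
      push_cast
      linarith
    have habs : |Φ n t| = ((m:ℝ)*n/(1+n*x)^(m+1)) * (((m + k).choose k : ℝ) * q^k *
        |f (k/((m:ℝ)*n))|) := by
      simp only [hΦdef, hgdef, ← hkdef, ← hqdef, abs_mul, abs_of_nonneg hpref.le,
        Nat.abs_cast, abs_of_nonneg (pow_nonneg hq0.le k)]
    have step1 : |f ((k:ℝ)/((m:ℝ)*n))| ≤ M' := hM' _ (Set.mem_Ici.mpr (by positivity))
    have step2 : (((m + k).choose k : ℕ) : ℝ) ≤ ((m+k : ℕ) : ℝ)^m := by
      have h2 : (m + k).choose k = (m+k).choose m := (Nat.choose_symm_add).symm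
      rw [h2]
      exact_mod_cast Nat.choose_le_pow (m+k) m
    have step3 : q^k ≤ ((1+x)/x) * Real.exp (-b*t) := by
      have e1 : q^k = q ^ ((k:ℝ)) := (Real.rpow_natCast q k).symm
      have e2 : q ^ ((k:ℝ)) ≤ q ^ ((m:ℝ)*n*t - 1) :=
        Real.rpow_le_rpow_of_exponent_ge hq0 hq1.le hk_ge
      have e3 : q ^ ((m:ℝ)*n*t - 1) = q ^ ((m:ℝ)*n*t) * q⁻¹ := by
        rw [Real.rpow_sub hq0, Real.rpow_one, div_eq_mul_inv]
      have e4 : q ^ ((m:ℝ)*n*t) ≤ Real.exp (-b*t) := by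
        rw [Real.rpow_def_of_pos hq0]
        apply Real.exp_le_exp.mpr
        have hlq : Real.log q ≤ -(1/(1+n*x)) := by
          have h5 := Real.log_le_sub_one_of_pos hq0
          have hq' : q - 1 = -(1/(1+n*x)) := by
            rw [hqdef]
            field_simp
            ring
          linarith
        calc Real.log q * ((m:ℝ)*n*t) ≤ -(1/(1+n*x)) * ((m:ℝ)*n*t) :=
              mul_le_mul_of_nonneg_right hlq (by positivity)
          _ ≤ -b*t := by
              rw [hbdef,
                show -(1/(1+(n:ℝ)*x)) * ((m:ℝ)*n*t) = -((m:ℝ)*n*t/(1+n*x)) from by ring,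
                show -((m:ℝ)/(2*x))*t = -((m:ℝ)*t/(2*x)) from by ring, neg_le_neg_iff,
                div_le_div_iff₀ (by positivity) h1nx]
              nlinarith
      have e5 : q⁻¹ ≤ (1+x)/x := by
        have hxq : x/(1+x) ≤ q := by
          rw [hqdef, div_le_div_iff₀ (by positivity) h1nx]
          nlinarith
        calc q⁻¹ ≤ (x/(1+x))⁻¹ := inv_anti₀ (by positivity) hxq
          _ = (1+x)/x := by rw [inv_div]
      calc q^k = q ^ ((k:ℝ)) := e1
        _ ≤ q ^ ((m:ℝ)*n*t - 1) := e2
        _ = q ^ ((m:ℝ)*n*t) * q⁻¹ := e3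
        _ ≤ Real.exp (-b*t) * ((1+x)/x) :=
            mul_le_mul e4 e5 (inv_nonneg.mpr hq0.le) (Real.exp_pos _).le
        _ = ((1+x)/x) * Real.exp (-b*t) := mul_comm _ _
    have step4 : ((m:ℝ)*n/(1+n*x)^(m+1)) * ((m+k : ℕ) : ℝ)^m ≤
        ((m:ℝ)^(m+1)/x^(m+1)) * (1+t)^m := by
      have hmk : ((m+k : ℕ) : ℝ) ≤ (m:ℝ)*n*(1+t) := by
        push_cast
        nlinarith
      have hden : ((n:ℝ)*x)^(m+1) ≤ (1+n*x)^(m+1) :=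
        pow_le_pow_left₀ (by positivity) (by linarith) _
      calc ((m:ℝ)*n/(1+n*x)^(m+1)) * ((m+k : ℕ) : ℝ)^m
          ≤ ((m:ℝ)*n/((n:ℝ)*x)^(m+1)) * ((m:ℝ)*n*(1+t))^m := by
            gcongr <;> first | positivity | exact Nat.cast_nonneg _ | exact hmk | exact hden
        _ = ((m:ℝ)^(m+1)/x^(m+1)) * (1+t)^m := by
            rw [mul_pow, mul_pow]
            field_simp
            ring
    have hnn1 : (0:ℝ) ≤ ((1+x)/x) * Real.exp (-b*t) := by positivity
    calc |Φ n t| = ((m:ℝ)*n/(1+n*x)^(m+1)) * (((m + k).choose k : ℝ) * q^k *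
        |f (k/((m:ℝ)*n))|) := habs
      _ ≤ ((m:ℝ)*n/(1+n*x)^(m+1)) * (((m+k : ℕ) : ℝ)^m * (((1+x)/x) * Real.exp (-b*t)) * M') := by
          apply mul_le_mul_of_nonneg_left _ hpref.le
          have h6 : ((m + k).choose k : ℝ) * q^k ≤
              ((m+k : ℕ) : ℝ)^m * (((1+x)/x) * Real.exp (-b*t)) :=
            mul_le_mul step2 step3 (pow_nonneg hq0.le k) (by positivity)
          exact mul_le_mul h6 step1 (abs_nonneg _) (by positivity)
      _ = (((m:ℝ)*n/(1+n*x)^(m+1)) * ((m+k : ℕ) : ℝ)^m) * ((((1+x)/x) * Real.exp (-b*t)) * M') := by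
          ring
      _ ≤ (((m:ℝ)^(m+1)/x^(m+1)) * (1+t)^m) * ((((1+x)/x) * Real.exp (-b*t)) * M') := by
          apply mul_le_mul_of_nonneg_right step4 (by positivity)
      _ = B t := by
          simp only [hBdef, hKdef]
          ring
  -- measurability
  have hmeas : ∀ n : ℕ, Measurable (Φ n) := by
    intro n
    have h1 : Measurable fun t : ℝ => ⌊(m:ℝ)*n*t⌋₊ :=
      (measurable_id.const_mul ((m:ℝ)*n)).nat_floor
    exact ((measurable_from_nat (f := g n)).comp h1).const_mul _
  -- integrability
  have hΦint : ∀ n : ℕ, n₀ ≤ n → MeasureTheory.IntegrableOn (Φ n) (Set.Ici (0:ℝ)) := by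
    intro n hn
    refine hBint.mono' ((hmeas n).aestronglyMeasurable) ?_
    filter_upwards [ae_restrict_mem measurableSet_Ici] with t ht
    exact hbound n hn t ht
  -- the sum equals the integral
  have hEq : ∀ n : ℕ, n₀ ≤ n →
      (1 / (1 + (n:ℝ) * x) ^ (m + 1)) * (∑' k : ℕ, g n k) =
        ∫ t in Set.Ioi (0:ℝ), Φ n t := by
    intro n hn
    obtain ⟨hn1, hnx⟩ := hn₀ n hn
    have hc : (0:ℝ) < (m:ℝ)*n := by
      have : (0:ℝ) < n := lt_of_lt_of_le one_pos hn1
      positivity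
    have h1nx : (0:ℝ) < 1 + n*x := by nlinarith
    have hpref : (0:ℝ) < (m:ℝ) * n / (1 + n * x) ^ (m+1) := by positivity
    have hint2 : MeasureTheory.IntegrableOn (fun t => g n ⌊(m:ℝ)*n*t⌋₊) (Set.Ici (0:ℝ)) := by
      have h2 : MeasureTheory.IntegrableOn
          (fun t => (((m:ℝ) * n / (1 + n * x) ^ (m+1))⁻¹ * Φ n t)) (Set.Ici (0:ℝ)) :=
        (hΦint n hn).const_mul (((m:ℝ) * n / (1 + n * x) ^ (m+1))⁻¹)
      refine MeasureTheory.IntegrableOn.congr_fun h2 ?_ measurableSet_Ici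
      intro t _
      simp only [hΦdef]
      rw [← mul_assoc, inv_mul_cancel₀ hpref.ne', one_mul]
    have hsum := sum_eq_int hc (g n) hint2
    rw [hsum]
    have hIM : (∫ t in Set.Ioi (0:ℝ), Φ n t) =
        ((m:ℝ) * n / (1 + n * x) ^ (m+1)) * ∫ t in Set.Ioi (0:ℝ), g n ⌊(m:ℝ)*n*t⌋₊ := by
      simp only [hΦdef]
      rw [MeasureTheory.integral_const_mul]
    rw [hIM]
    ring
  -- pointwise limit
  set L : ℝ → ℝ := fun t => (1/(m.factorial:ℝ) * ((m:ℝ)/x * ((m:ℝ)*t/x)^m)) *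
      Real.exp (-((m:ℝ)*t/x)) * f t with hLdef
  have hpos : ∀ n : ℕ, (0:ℝ) < 1 + (n:ℝ)*x := fun n => by positivity
  have hfactne : (m.factorial:ℝ) ≠ 0 := Nat.cast_ne_zero.mpr (Nat.factorial_ne_zero m)
  have hprod : ∀ k : ℕ, (∏ i ∈ Finset.range m, ((k:ℝ) + ((m - i:ℕ):ℝ))) =
      (m.factorial : ℝ) * ((m+k).choose k : ℝ) := by
    intro k
    have h1 : (m+k).descFactorial m = ∏ i ∈ Finset.range m, (m+k-i) :=
      Nat.descFactorial_eq_prod_range _ _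
    have h2 : (m+k).descFactorial m = m.factorial * (m+k).choose m :=
      Nat.descFactorial_eq_factorial_mul_choose _ _
    have h3 : (m+k).choose m = (m+k).choose k := Nat.choose_symm_add
    calc ∏ i ∈ Finset.range m, ((k:ℝ) + ((m - i:ℕ):ℝ))
        = ∏ i ∈ Finset.range m, (((m+k-i : ℕ)):ℝ) := by
          refine Finset.prod_congr rfl (fun i hi => ?_)
          have hi' : i < m := Finset.mem_range.mp hi
          have : m + k - i = k + (m-i) := by omega
          rw [this, Nat.cast_add]
      _ = (((m+k).descFactorial m : ℕ):ℝ) := by rw [h1]; push_cast; ring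
      _ = (m.factorial : ℝ) * ((m+k).choose k : ℝ) := by rw [h2, h3]; push_cast; ring
  have hlim : ∀ t : ℝ, 0 < t → Tendsto (fun n => Φ n t) atTop (𝓝 (L t)) := by
    intro t ht
    have l1 : Tendsto (fun n : ℕ => (m:ℝ)*n) atTop atTop :=
      (tendsto_natCast_atTop_atTop (R := ℝ)).const_mul_atTop hm0
    have l2 : Tendsto (fun n : ℕ => (⌊(m:ℝ)*n*t⌋₊ : ℝ)/((m:ℝ)*n)) atTop (𝓝 t) := by
      have h := (tendsto_nat_floor_mul_div_atTop (a := t) ht.le).comp l1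
      refine h.congr fun n => ?_
      simp only [Function.comp_apply, mul_comm t ((m:ℝ)*(n:ℝ))]
    have l3 : Tendsto (fun n : ℕ => 1 + (n:ℝ)*x) atTop atTop :=
      tendsto_atTop_add_const_left _ 1 ((tendsto_natCast_atTop_atTop).atTop_mul_const hx)
    have l4 : Tendsto (fun n : ℕ => ((m:ℝ)*n)/(1+(n:ℝ)*x)) atTop (𝓝 ((m:ℝ)/x)) := by
      have hden : Tendsto (fun n : ℕ => 1/(n:ℝ) + x) atTop (𝓝 (0 + x)) :=
        tendsto_one_div_atTop_nhds_zero_nat.add tendsto_const_nhds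
      rw [zero_add] at hden
      have h := Tendsto.div (tendsto_const_nhds : Tendsto (fun _ : ℕ => (m:ℝ)) atTop _)
        hden hx.ne'
      apply h.congr'
      filter_upwards [eventually_ge_atTop 1] with n hn
      have hn0 : (0:ℝ) < n := by exact_mod_cast hn
      rw [Pi.div_apply]
      field_simp
    have l5 : Tendsto (fun n : ℕ => (⌊(m:ℝ)*n*t⌋₊:ℝ)/(1+(n:ℝ)*x)) atTop
        (𝓝 (t*((m:ℝ)/x))) := by
      have h := l2.mul l4
      apply h.congr'
      filter_upwards [eventually_ge_atTop 1] with n hn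
      have hn0 : (0:ℝ) < n := by exact_mod_cast hn
      have hmn : ((m:ℝ)*n) ≠ 0 := by positivity
      field_simp
    have l6 : Tendsto (fun n : ℕ => (1+(n:ℝ)*x) * Real.log (1 - 1/(1+(n:ℝ)*x))) atTop
        (𝓝 (-1)) := by
      have h := (Real.tendsto_mul_log_one_add_div_atTop (-1)).comp l3
      refine h.congr fun n => ?_
      simp only [Function.comp_apply]
      rw [show (1:ℝ) + -1/(1+(n:ℝ)*x) = 1 - 1/(1+(n:ℝ)*x) from by ring]
    have l7 : Tendsto (fun n : ℕ => (⌊(m:ℝ)*n*t⌋₊:ℝ) *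
        Real.log ((n:ℝ)*x/(1+(n:ℝ)*x))) atTop (𝓝 (-((m:ℝ)*t/x))) := by
      have h := l5.mul l6
      rw [show t*((m:ℝ)/x) * (-1) = -((m:ℝ)*t/x) from by ring] at h
      refine h.congr fun n => ?_
      have h1 : (1:ℝ) - 1/(1+(n:ℝ)*x) = (n:ℝ)*x/(1+(n:ℝ)*x) := by
        field_simp
        ring
      rw [h1]
      field_simp
    have l8 : Tendsto (fun n : ℕ => ((n:ℝ)*x/(1+(n:ℝ)*x))^(⌊(m:ℝ)*n*t⌋₊)) atTop
        (𝓝 (Real.exp (-((m:ℝ)*t/x)))) := by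
      have h := (Real.continuous_exp.tendsto _).comp l7
      apply h.congr'
      filter_upwards [eventually_ge_atTop n₀] with n hn
      obtain ⟨hn1, hnx⟩ := hn₀ n hn
      have hq0 : (0:ℝ) < (n:ℝ)*x/(1+(n:ℝ)*x) := div_pos (by nlinarith) (hpos n)
      simp only [Function.comp_apply]
      rw [Real.exp_nat_mul, Real.exp_log hq0]
    have lfac : ∀ i : ℕ, Tendsto (fun n : ℕ =>
        ((⌊(m:ℝ)*n*t⌋₊:ℝ) + ((m - i : ℕ):ℝ))/(1+(n:ℝ)*x)) atTop (𝓝 (t*((m:ℝ)/x))) := by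
      intro i
      have hconst : Tendsto (fun n : ℕ => ((m - i:ℕ):ℝ)/(1+(n:ℝ)*x)) atTop (𝓝 0) :=
        Tendsto.div_atTop tendsto_const_nhds l3
      have h := l5.add hconst
      rw [add_zero] at h
      refine h.congr fun n => ?_
      rw [← add_div]
    have lP : Tendsto (fun n : ℕ => ∏ i ∈ Finset.range m,
        ((⌊(m:ℝ)*n*t⌋₊:ℝ) + ((m - i : ℕ):ℝ))/(1+(n:ℝ)*x)) atTop
        (𝓝 ((t*((m:ℝ)/x))^m)) := by
      have h := tendsto_finset_prod (Finset.range m) (fun i (_ : i ∈ Finset.range m) => lfac i)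
      rwa [Finset.prod_const, Finset.card_range] at h
    have hfc : ContinuousAt f t := by
      have h1 : Set.Ici (0:ℝ) ∈ 𝓝 t := mem_of_superset (Ioi_mem_nhds ht) Set.Ioi_subset_Ici_self
      exact (hf t (Set.mem_Ici.mpr ht.le)).continuousAt h1
    have l10 : Tendsto (fun n : ℕ => f ((⌊(m:ℝ)*n*t⌋₊:ℝ)/((m:ℝ)*n))) atTop (𝓝 (f t)) :=
      hfc.tendsto.comp l2
    have hcomb := (((tendsto_const_nhds (x := 1/(m.factorial:ℝ))).mul (l4.mul lP)).mul l8).mul l10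
    rw [show t*((m:ℝ)/x) = (m:ℝ)*t/x from by ring] at hcomb
    apply hcomb.congr'
    filter_upwards [eventually_ge_atTop n₀] with n hn
    obtain ⟨hn1, hnx⟩ := hn₀ n hn
    simp only [hΦdef, hgdef]
    rw [Finset.prod_div_distrib, Finset.prod_const, Finset.card_range,
      hprod ⌊(m:ℝ)*(n:ℝ)*t⌋₊]
    have h1nxne : (1 + (n:ℝ)*x) ≠ 0 := (hpos n).ne'
    field_simp
    ring
  -- dominated convergence
  have hDCT : Tendsto (fun n => ∫ t in Set.Ioi (0:ℝ), Φ n t) atTop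
      (𝓝 (∫ t in Set.Ioi (0:ℝ), L t)) := by
    refine MeasureTheory.tendsto_integral_filter_of_dominated_convergence B
      (Eventually.of_forall fun n => ((hmeas n).aestronglyMeasurable)) ?_ 
      (hBint.mono_set Set.Ioi_subset_Ici_self) ?_
    · filter_upwards [eventually_ge_atTop n₀] with n hn
      filter_upwards [ae_restrict_mem measurableSet_Ioi] with t ht
      rw [Real.norm_eq_abs]
      exact hbound n hn t (le_of_lt ht)
    · filter_upwards [ae_restrict_mem measurableSet_Ioi] with t ht
      exact hlim t ht
  -- identify the limit integral with the Gamma operator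
  have hfinal : ∫ t in Set.Ioi (0:ℝ), L t =
      (((m : ℝ) + 1) / m * x) ^ (-((m : ℤ) + 1)) / (m.factorial : ℝ) *
        ∫ t in Set.Ioi (0 : ℝ),
          f (t / (m + 1)) * t ^ m * Real.exp (-t / (((m : ℝ) + 1) / m * x)) := by
    have hm1 : (0:ℝ) < (m:ℝ)+1 := by positivity
    have hy : (0:ℝ) < ((m:ℝ)+1)/m*x := by positivity
    have hsub := MeasureTheory.integral_comp_mul_left_Ioi
      (fun u => f (u/((m:ℝ)+1)) * u^m * Real.exp (-u/(((m:ℝ)+1)/(m:ℝ)*x))) 0 hm1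
    rw [mul_zero, smul_eq_mul] at hsub
    have h3 : ∀ u : ℝ, f ((((m:ℝ)+1)*u)/((m:ℝ)+1)) * (((m:ℝ)+1)*u)^m *
        Real.exp (-(((m:ℝ)+1)*u)/(((m:ℝ)+1)/(m:ℝ)*x)) =
        ((m:ℝ)+1)^m * (f u * (u^m * Real.exp (-((m:ℝ)*u/x)))) := by
      intro u
      rw [mul_div_cancel_left₀ _ hm1.ne', mul_pow]
      rw [show -(((m:ℝ)+1)*u)/(((m:ℝ)+1)/(m:ℝ)*x) = -((m:ℝ)*u/x) from by
        field_simp]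
      ring
    have h4 : (∫ u in Set.Ioi (0:ℝ), f ((((m:ℝ)+1)*u)/((m:ℝ)+1)) * (((m:ℝ)+1)*u)^m *
        Real.exp (-(((m:ℝ)+1)*u)/(((m:ℝ)+1)/(m:ℝ)*x))) =
        ((m:ℝ)+1)^m * ∫ u in Set.Ioi (0:ℝ), f u * (u^m * Real.exp (-((m:ℝ)*u/x))) := by
      rw [MeasureTheory.setIntegral_congr_fun measurableSet_Ioi (fun u _ => h3 u)]
      rw [MeasureTheory.integral_const_mul]
    have h5 : ∫ t in Set.Ioi (0:ℝ), L t =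
        ((m:ℝ)^(m+1)/(x^(m+1) * m.factorial)) *
          ∫ u in Set.Ioi (0:ℝ), f u * (u^m * Real.exp (-((m:ℝ)*u/x))) := by
      rw [← MeasureTheory.integral_const_mul]
      refine MeasureTheory.setIntegral_congr_fun measurableSet_Ioi (fun u _ => ?_)
      simp only [hLdef]
      rw [div_pow, mul_pow]
      field_simp
      ring
    have hzpow : (((m:ℝ)+1)/m*x) ^ (-((m:ℤ)+1)) = ((((m:ℝ)+1)/(m:ℝ)*x) ^ (m+1))⁻¹ := by
      rw [show (-((m:ℤ)+1)) = -((m+1 : ℕ) : ℤ) from by push_cast; ring, zpow_neg, zpow_natCast]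
    have hC : (((m:ℝ)+1)/m*x) ^ (-((m:ℤ)+1)) / (m.factorial:ℝ) * (((m:ℝ)+1) * ((m:ℝ)+1)^m) =
        (m:ℝ)^(m+1)/(x^(m+1) * m.factorial) := by
      rw [hzpow]
      rw [mul_pow, div_pow]
      field_simp
      ring
    have h2 : (∫ t in Set.Ioi (0:ℝ),
        f (t / ((m:ℝ) + 1)) * t ^ m * Real.exp (-t / (((m : ℝ) + 1) / m * x))) =
        ((m:ℝ)+1) * (((m:ℝ)+1)^m * ∫ u in Set.Ioi (0:ℝ),
          f u * (u^m * Real.exp (-((m:ℝ)*u/x)))) := by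
      rw [← h4, hsub]
      rw [← mul_assoc, mul_inv_cancel₀ hm1.ne', one_mul]
    rw [h5, h2, show (((m : ℝ) + 1) / m * x) ^ (-((m:ℤ) + 1)) / (m.factorial:ℝ) *
        (((m:ℝ)+1) * (((m:ℝ)+1)^m * ∫ u in Set.Ioi (0:ℝ),
          f u * (u^m * Real.exp (-((m:ℝ)*u/x))))) =
        ((((m : ℝ) + 1) / m * x) ^ (-((m:ℤ) + 1)) / (m.factorial:ℝ) *
          (((m:ℝ)+1) * ((m:ℝ)+1)^m)) * ∫ u in Set.Ioi (0:ℝ),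
          f u * (u^m * Real.exp (-((m:ℝ)*u/x))) from by ring, hC]
  rw [← hfinal]
  refine hDCT.congr' ?_
  filter_upwards [eventually_ge_atTop n₀] with n hn
  exact (hEq n hn).symm
end
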